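/- arXiv:1511.05529 — 6 statements merged into one kernel-verified Lean document; each statement's English description precedes it below -/
import Mathlib

section
/- Let α > 0 and ω ∈ ℂ \ [π²/α², ∞). The meromorphic function m_ω(ξ) = 1/α + Σ_{k=1}^∞ 2α(ξ² − ω)/(α²(ξ² − ω) + k²π²) has residue at ξ = ±i√(π²/α² − ω) equal to ±(π²/α³)·i/√(π²/α² − ω). -/
open Complex Filter Topology

/-- The branch of the square root holomorphic on `ℂ \ (-∞,0]`, positive on `(0,∞)`,
with nonnegative imaginary part on `(-∞,0]`. -/
noncomputable def csqrt (z : ℂ) : ℂ := z ^ ((1 : ℂ) / 2)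

/-- The meromorphic function `m_ω` given by its partial fraction series. -/
noncomputable def mSeries (α : ℝ) (ω : ℂ) (z : ℂ) : ℂ :=
  1 / (α : ℂ) + ∑' k : ℕ,
    2 * (α : ℂ) * (z ^ 2 - ω) /
      ((α : ℂ) ^ 2 * (z ^ 2 - ω) + ((k : ℂ) + 1) ^ 2 * (Real.pi : ℂ) ^ 2)

lemma key_residue (α : ℝ) (hα : 0 < α) (ω z₀ : ℂ) (hz₀ : z₀ ≠ 0)
    (hsq : (α : ℂ) ^ 2 * (z₀ ^ 2 - ω) + (Real.pi : ℂ) ^ 2 = 0) :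
    Tendsto (fun z : ℂ => (z - z₀) * mSeries α ω z) (𝓝[≠] z₀)
      (𝓝 (-(Real.pi : ℂ) ^ 2 / ((α : ℂ) ^ 3 * z₀))) := by
  have hP : (0:ℝ) < Real.pi := Real.pi_pos
  have hαC : (α : ℂ) ≠ 0 := by exact_mod_cast hα.ne'
  have hz₀n : (0:ℝ) < ‖z₀‖ := norm_pos_iff.mpr hz₀
  have hzz : z₀ + z₀ ≠ 0 := by
    rw [← two_mul]; exact mul_ne_zero two_ne_zero hz₀
  set L : ℂ := -(Real.pi : ℂ) ^ 2 / ((α : ℂ) ^ 3 * z₀) with hL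
  set f : ℂ → ℕ → ℂ := fun z k => (z - z₀) *
      (2 * (α : ℂ) * (z ^ 2 - ω) /
        ((α : ℂ) ^ 2 * (z ^ 2 - ω) + ((k : ℂ) + 1) ^ 2 * (Real.pi : ℂ) ^ 2)) with hf
  set g : ℕ → ℂ := fun k => if k = 0 then L else 0 with hg
  set C : ℝ := max (4 * Real.pi ^ 2 / (α ^ 3 * ‖z₀‖)) (8 / α) with hC
  set bound : ℕ → ℝ := fun k => C / ((k : ℝ) + 1) ^ 2 with hbound
  -- cancellation for the k = 0 term
  have hden0 : ∀ z : ℂ, (α : ℂ) ^ 2 * (z ^ 2 - ω) + ((0 : ℂ) + 1) ^ 2 * (Real.pi : ℂ) ^ 2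
      = (z - z₀) * ((α : ℂ) ^ 2 * (z + z₀)) := by
    intro z; linear_combination hsq
  have hf0 : ∀ z : ℂ, z ≠ z₀ → f z 0 =
      2 * (α : ℂ) * (z ^ 2 - ω) / ((α : ℂ) ^ 2 * (z + z₀)) := by
    intro z hz
    have hz' : z - z₀ ≠ 0 := sub_ne_zero.mpr hz
    simp only [hf, Nat.cast_zero, hden0 z]
    rw [mul_div_assoc', mul_div_mul_left _ _ hz']
  -- value of the limit for k = 0
  have hval : 2 * (α : ℂ) * (z₀ ^ 2 - ω) / ((α : ℂ) ^ 2 * (z₀ + z₀)) = L := by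
    rw [hL, div_eq_div_iff (mul_ne_zero (pow_ne_zero _ hαC) hzz)
      (mul_ne_zero (pow_ne_zero _ hαC) hz₀)]
    linear_combination (2 * (α:ℂ) ^ 2 * z₀) * hsq
  -- summability of the bound
  have hsum : Summable bound := by
    have h1 : Summable (fun k : ℕ => 1 / ((k : ℝ) + 1) ^ 2) := by
      have := (summable_nat_add_iff 1).mpr (Real.summable_one_div_nat_pow.mpr one_lt_two)
      simpa using this
    simpa [hbound, div_eq_mul_inv, one_div] using h1.mul_left C
  -- pointwise limits
  have hlim : ∀ k : ℕ, Tendsto (f · k) (𝓝[≠] z₀) (𝓝 (g k)) := by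
    intro k
    match k with
    | 0 =>
      have hden : (α : ℂ) ^ 2 * (z₀ + z₀) ≠ 0 := mul_ne_zero (pow_ne_zero _ hαC) hzz
      have hcont : Tendsto (fun z : ℂ => 2 * (α : ℂ) * (z ^ 2 - ω) / ((α : ℂ) ^ 2 * (z + z₀)))
          (𝓝 z₀) (𝓝 L) := by
        rw [← hval]
        exact ContinuousAt.div
          ((by fun_prop : Continuous fun z : ℂ => 2 * (α : ℂ) * (z ^ 2 - ω)).continuousAt)
          ((by fun_prop : Continuous fun z : ℂ => (α : ℂ) ^ 2 * (z + z₀)).continuousAt) hden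
      exact Tendsto.congr' (by filter_upwards [self_mem_nhdsWithin] with z hz
        using (hf0 z hz).symm) (hcont.mono_left nhdsWithin_le_nhds)
    | k + 1 =>
      have hden : (α : ℂ) ^ 2 * (z₀ ^ 2 - ω) + (((k+1 : ℕ) : ℂ) + 1) ^ 2 * (Real.pi : ℂ) ^ 2 ≠ 0 := by
        have he : (α : ℂ) ^ 2 * (z₀ ^ 2 - ω) + (((k+1 : ℕ) : ℂ) + 1) ^ 2 * (Real.pi : ℂ) ^ 2
            = (((((k:ℝ)+2) ^ 2 - 1 : ℝ)) : ℂ) * (Real.pi : ℂ) ^ 2 := by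
          push_cast
          linear_combination hsq
        rw [he]
        apply mul_ne_zero
        · rw [Complex.ofReal_ne_zero]
          nlinarith [Nat.cast_nonneg (α := ℝ) k]
        · exact pow_ne_zero 2 (by exact_mod_cast hP.ne')
      have hcont : Tendsto (f · (k+1)) (𝓝 z₀) (𝓝 ((z₀ - z₀) *
          (2 * (α : ℂ) * (z₀ ^ 2 - ω) /
            ((α : ℂ) ^ 2 * (z₀ ^ 2 - ω) + (((k+1 : ℕ) : ℂ) + 1) ^ 2 * (Real.pi : ℂ) ^ 2)))) := by
        apply Tendsto.mul ((by fun_prop : Continuous fun z : ℂ => z - z₀).continuousAt)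
        exact ContinuousAt.div
          ((by fun_prop : Continuous fun z : ℂ => 2 * (α : ℂ) * (z ^ 2 - ω)).continuousAt)
          ((by fun_prop : Continuous fun z : ℂ =>
            (α : ℂ) ^ 2 * (z ^ 2 - ω) + (((k+1 : ℕ) : ℂ) + 1) ^ 2 * (Real.pi : ℂ) ^ 2).continuousAt)
          hden
      have hv : (z₀ - z₀) * (2 * (α : ℂ) * (z₀ ^ 2 - ω) /
            ((α : ℂ) ^ 2 * (z₀ ^ 2 - ω) + (((k+1 : ℕ) : ℂ) + 1) ^ 2 * (Real.pi : ℂ) ^ 2)) = g (k+1) := by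
        simp [hg]
      rw [← hv]
      exact hcont.mono_left nhdsWithin_le_nhds
  -- eventual bound
  have hbd : ∀ᶠ z in 𝓝[≠] z₀, ∀ k, ‖f z k‖ ≤ bound k := by
    have E1 : ∀ᶠ z in 𝓝 z₀, ‖(α : ℂ) ^ 2 * (z ^ 2 - ω) + (Real.pi : ℂ) ^ 2‖ < Real.pi ^ 2 := by
      have ht : Tendsto (fun z : ℂ => ‖(α : ℂ) ^ 2 * (z ^ 2 - ω) + (Real.pi : ℂ) ^ 2‖)
          (𝓝 z₀) (𝓝 ‖(α : ℂ) ^ 2 * (z₀ ^ 2 - ω) + (Real.pi : ℂ) ^ 2‖) :=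
        ((by fun_prop : Continuous fun z : ℂ =>
          ‖(α : ℂ) ^ 2 * (z ^ 2 - ω) + (Real.pi : ℂ) ^ 2‖).continuousAt)
      rw [hsq, norm_zero] at ht
      exact ht.eventually_lt_const (by positivity)
    have E2 : ∀ᶠ z in 𝓝 z₀, ‖z - z₀‖ ≤ 1 := by
      have ht : Tendsto (fun z : ℂ => ‖z - z₀‖) (𝓝 z₀) (𝓝 ‖z₀ - z₀‖) :=
        ((by fun_prop : Continuous fun z : ℂ => ‖z - z₀‖).continuousAt)
      rw [sub_self, norm_zero] at ht
      exact (ht.eventually_lt_const one_pos).mono fun z h => h.le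
    have E3 : ∀ᶠ z in 𝓝 z₀, ‖z₀‖ ≤ ‖z + z₀‖ := by
      have ht : Tendsto (fun z : ℂ => ‖z + z₀‖) (𝓝 z₀) (𝓝 ‖z₀ + z₀‖) :=
        ((by fun_prop : Continuous fun z : ℂ => ‖z + z₀‖).continuousAt)
      have h2 : ‖z₀‖ < ‖z₀ + z₀‖ := by
        rw [← two_mul, norm_mul]
        have : ‖(2:ℂ)‖ = 2 := by simp
        rw [this]; nlinarith
      exact (ht.eventually_const_lt h2).mono fun z h => h.le
    filter_upwards [E1.filter_mono nhdsWithin_le_nhds, E2.filter_mono nhdsWithin_le_nhds,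
      E3.filter_mono nhdsWithin_le_nhds, self_mem_nhdsWithin] with z h1 h2 h3 hz
    have hπn : ‖(Real.pi : ℂ) ^ 2‖ = Real.pi ^ 2 := by
      rw [norm_pow, Complex.norm_real, Real.norm_eq_abs, abs_of_pos hP]
    have hw : ‖(α : ℂ) ^ 2 * (z ^ 2 - ω)‖ ≤ 2 * Real.pi ^ 2 := by
      have h1' := norm_sub_le ((α : ℂ) ^ 2 * (z ^ 2 - ω) + (Real.pi : ℂ) ^ 2) ((Real.pi : ℂ) ^ 2)
      have e : (α : ℂ) ^ 2 * (z ^ 2 - ω) + (Real.pi : ℂ) ^ 2 - (Real.pi : ℂ) ^ 2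
          = (α : ℂ) ^ 2 * (z ^ 2 - ω) := by ring
      rw [e, hπn] at h1'
      linarith
    have hwn : ‖z ^ 2 - ω‖ ≤ 2 * Real.pi ^ 2 / α ^ 2 := by
      rw [norm_mul, norm_pow, Complex.norm_real, Real.norm_eq_abs, abs_of_pos hα] at hw
      rw [le_div_iff₀ (by positivity)]
      nlinarith [norm_nonneg (z ^ 2 - ω)]
    have hNn : ‖2 * (α : ℂ) * (z ^ 2 - ω)‖ ≤ 4 * Real.pi ^ 2 / α := by
      have h2' : ‖(2 : ℂ) * (α : ℂ)‖ = 2 * α := by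
        rw [norm_mul, Complex.norm_real, Real.norm_eq_abs, abs_of_pos hα]; simp
      rw [norm_mul, h2']
      calc 2 * α * ‖z ^ 2 - ω‖ ≤ 2 * α * (2 * Real.pi ^ 2 / α ^ 2) :=
            mul_le_mul_of_nonneg_left hwn (by positivity)
        _ = 4 * Real.pi ^ 2 / α := by field_simp; ring
    intro k
    match k with
    | 0 =>
      rw [hf0 z hz, hbound]
      simp only [Nat.cast_zero, zero_add, one_pow, div_one]
      have hden : α ^ 2 * ‖z₀‖ ≤ ‖(α : ℂ) ^ 2 * (z + z₀)‖ := by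
        rw [norm_mul, norm_pow, Complex.norm_real, Real.norm_eq_abs, abs_of_pos hα]
        exact mul_le_mul_of_nonneg_left h3 (by positivity)
      rw [norm_div]
      calc ‖2 * (α : ℂ) * (z ^ 2 - ω)‖ / ‖(α : ℂ) ^ 2 * (z + z₀)‖
          ≤ (4 * Real.pi ^ 2 / α) / (α ^ 2 * ‖z₀‖) :=
            div_le_div₀ (by positivity) hNn (by positivity) hden
        _ = 4 * Real.pi ^ 2 / (α ^ 3 * ‖z₀‖) := by field_simp
        _ ≤ C := le_max_left _ _
    | k + 1 =>
      have hnorm : ‖(((k+1:ℕ) : ℂ) + 1) ^ 2 * (Real.pi : ℂ) ^ 2‖ = ((k:ℝ) + 2) ^ 2 * Real.pi ^ 2 := by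
        rw [norm_mul, hπn, norm_pow]
        congr 2
        have e : (((k+1:ℕ) : ℂ) + 1) = ((((k:ℝ) + 2 : ℝ)) : ℂ) := by push_cast; ring
        rw [e, Complex.norm_real, Real.norm_eq_abs, abs_of_pos (by positivity)]
      have hDn : ((k:ℝ) + 2) ^ 2 * Real.pi ^ 2 / 2 ≤
          ‖(α : ℂ) ^ 2 * (z ^ 2 - ω) + (((k+1:ℕ) : ℂ) + 1) ^ 2 * (Real.pi : ℂ) ^ 2‖ := by
        have htri := norm_sub_le
          ((α : ℂ) ^ 2 * (z ^ 2 - ω) + (((k+1:ℕ) : ℂ) + 1) ^ 2 * (Real.pi : ℂ) ^ 2)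
          ((α : ℂ) ^ 2 * (z ^ 2 - ω))
        have e : (α : ℂ) ^ 2 * (z ^ 2 - ω) + (((k+1:ℕ) : ℂ) + 1) ^ 2 * (Real.pi : ℂ) ^ 2
            - (α : ℂ) ^ 2 * (z ^ 2 - ω) = (((k+1:ℕ) : ℂ) + 1) ^ 2 * (Real.pi : ℂ) ^ 2 := by ring
        rw [e, hnorm] at htri
        have hk4 : (4:ℝ) ≤ ((k:ℝ) + 2) ^ 2 := by nlinarith [Nat.cast_nonneg (α := ℝ) k]
        nlinarith [hw, htri]
      rw [hf, hbound]
      rw [norm_mul, norm_div]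
      calc ‖z - z₀‖ * (‖2 * (α : ℂ) * (z ^ 2 - ω)‖ /
            ‖(α : ℂ) ^ 2 * (z ^ 2 - ω) + (((k+1:ℕ):ℂ) + 1) ^ 2 * (Real.pi : ℂ) ^ 2‖)
          ≤ 1 * ((4 * Real.pi ^ 2 / α) / (((k:ℝ) + 2) ^ 2 * Real.pi ^ 2 / 2)) := by
            apply mul_le_mul h2 _ (by positivity) one_pos.le
            exact div_le_div₀ (by positivity) hNn (by positivity) hDn
        _ = 8 / α / ((k:ℝ) + 2) ^ 2 := by field_simp; ring
        _ ≤ C / ((k:ℝ) + 2) ^ 2 := by gcongr; exact le_max_right _ _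
        _ = C / (((k+1:ℕ):ℝ) + 1) ^ 2 := by push_cast; ring_nf
  have htsum := tendsto_tsum_of_dominated_convergence hsum hlim hbd
  have hgsum : ∑' k, g k = L := by
    rw [tsum_eq_single 0]
    · simp [hg]
    · intro b hb; simp [hg, hb]
  rw [hgsum] at htsum
  have hfinal : Tendsto (fun z : ℂ => (z - z₀) * (1 / (α : ℂ)) + ∑' k, f z k)
      (𝓝[≠] z₀) (𝓝 (0 + L)) := by
    apply Tendsto.add _ htsum
    have h0 : Tendsto (fun z : ℂ => (z - z₀) * (1 / (α : ℂ))) (𝓝 z₀)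
        (𝓝 ((z₀ - z₀) * (1 / (α : ℂ)))) :=
      ((by fun_prop : Continuous fun z : ℂ => (z - z₀) * (1 / (α : ℂ))).continuousAt)
    simpa using h0.mono_left nhdsWithin_le_nhds
  rw [zero_add] at hfinal
  apply hfinal.congr
  intro z
  simp only [hf]
  rw [tsum_mul_left, mSeries, mul_add]

/-- The residue of `m_ω` at `ξ = ± i √(π²/α² - ω)` equals `± (π²/α³)·i/√(π²/α²-ω)`. -/
theorem residue_of_m (α : ℝ) (hα : 0 < α) (ω : ℂ)
    (hω : ω ∉ {z : ℂ | z.im = 0 ∧ (Real.pi ^ 2 / α ^ 2 : ℝ) ≤ z.re}) :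
    Tendsto (fun z : ℂ =>
        (z - Complex.I * csqrt (((Real.pi ^ 2 / α ^ 2 : ℝ) : ℂ) - ω)) * mSeries α ω z)
      (𝓝[≠] (Complex.I * csqrt (((Real.pi ^ 2 / α ^ 2 : ℝ) : ℂ) - ω)))
      (𝓝 (((Real.pi ^ 2 / α ^ 3 : ℝ) : ℂ) * Complex.I /
        csqrt (((Real.pi ^ 2 / α ^ 2 : ℝ) : ℂ) - ω))) ∧
    Tendsto (fun z : ℂ =>
        (z - -(Complex.I * csqrt (((Real.pi ^ 2 / α ^ 2 : ℝ) : ℂ) - ω))) * mSeries α ω z)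
      (𝓝[≠] (-(Complex.I * csqrt (((Real.pi ^ 2 / α ^ 2 : ℝ) : ℂ) - ω))))
      (𝓝 (-(((Real.pi ^ 2 / α ^ 3 : ℝ) : ℂ) * Complex.I /
        csqrt (((Real.pi ^ 2 / α ^ 2 : ℝ) : ℂ) - ω)))) := by
  have hαC : (α : ℂ) ≠ 0 := by exact_mod_cast hα.ne'
  have hP : (0:ℝ) < Real.pi := Real.pi_pos
  set u : ℂ := ((Real.pi ^ 2 / α ^ 2 : ℝ) : ℂ) with hu_def
  have hu : u - ω ≠ 0 := by
    intro h
    have hωu : ω = u := by linear_combination -h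
    apply hω
    rw [hωu, hu_def]
    exact ⟨Complex.ofReal_im _, by rw [Complex.ofReal_re]⟩
  have hs2 : csqrt (u - ω) ^ 2 = u - ω := by
    rw [csqrt, sq, ← Complex.cpow_add _ _ hu]
    norm_num
  set s : ℂ := csqrt (u - ω) with hs_def
  have hs : s ≠ 0 := fun h => hu (by rw [← hs2, h]; ring)
  set z₀ : ℂ := Complex.I * s with hz₀_def
  have hz₀ : z₀ ≠ 0 := mul_ne_zero Complex.I_ne_zero hs
  have hsq : (α : ℂ) ^ 2 * (z₀ ^ 2 - ω) + (Real.pi : ℂ) ^ 2 = 0 := by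
    have hzsq : z₀ ^ 2 = -(u - ω) := by
      rw [hz₀_def, mul_pow, Complex.I_sq, hs2]; ring
    rw [hzsq]
    have hu' : u = (Real.pi : ℂ) ^ 2 / (α : ℂ) ^ 2 := by rw [hu_def]; push_cast; ring
    rw [hu']
    field_simp
    ring
  have hLval : -(Real.pi : ℂ) ^ 2 / ((α : ℂ) ^ 3 * z₀)
      = ((Real.pi ^ 2 / α ^ 3 : ℝ) : ℂ) * Complex.I / s := by
    rw [div_eq_div_iff (mul_ne_zero (pow_ne_zero _ hαC) hz₀) hs, hz₀_def]
    push_cast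
    field_simp
    linear_combination (-1:ℂ) * Complex.I_sq
  have h := key_residue α hα ω z₀ hz₀ hsq
  rw [hLval] at h
  refine ⟨h, ?_⟩
  have hneg : Tendsto (fun z : ℂ => -z) (𝓝[≠] (-z₀)) (𝓝[≠] z₀) := by
    have := (continuous_neg.continuousWithinAt (s := {(-z₀)}ᶜ) (x := -z₀)).tendsto_nhdsWithin
      (t := {z₀}ᶜ) (fun z hz h' => hz (by simpa using congrArg Neg.neg h'))
    simpa using this
  have h2 := (h.comp hneg).neg
  apply h2.congr
  intro z
  have hm : mSeries α ω (-z) = mSeries α ω z := by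
    simp only [mSeries, neg_sq]
  simp only [Function.comp]
  rw [hm]
  ring
end

section
/- For fixed ξ ∈ ℝ and α > 0, the function ω ↦ m_ω(ξ) = 1/α + Σ_{k=1}^∞ 2α/(α² + k²π²/(ξ² − ω)) is strictly decreasing in ω on (−∞, ξ² ) ∪ (ξ², ∞) intersected with (−∞, π²/α²); in particular, for ω₁ < ω₂ < π²/α² one has m_{ω₁}(ξ) > m_{ω₂}(ξ) for every ξ ∈ ℝ. -/
lemma aux_denom_pos' (α : ℝ) (hα : 0 < α) (ω : ℝ) (hω : ω < Real.pi ^ 2 / α ^ 2) (ξ : ℝ)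
    (k : ℕ) : 0 < α ^ 2 * (ξ ^ 2 - ω) + ((k : ℝ) + 1) ^ 2 * Real.pi ^ 2 := by
  have hπ : 0 < Real.pi := Real.pi_pos
  have hk : (1 : ℝ) ≤ ((k : ℝ) + 1) ^ 2 := by
    nlinarith [Nat.cast_nonneg (α := ℝ) k]
  have h' : α ^ 2 * ω < Real.pi ^ 2 := by
    rw [lt_div_iff₀ (by positivity : (0:ℝ) < α ^ 2)] at hω
    linarith
  nlinarith [sq_nonneg ξ, mul_pos (pow_pos hα 2) hπ]

set_option maxHeartbeats 1000000 in
lemma aux_summable (α : ℝ) (hα : 0 < α) (ω : ℝ) (hω : ω < Real.pi ^ 2 / α ^ 2) (ξ : ℝ) :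
    Summable (fun k : ℕ =>
      2 * α * (ξ ^ 2 - ω) / (α ^ 2 * (ξ ^ 2 - ω) + ((k : ℝ) + 1) ^ 2 * Real.pi ^ 2)) := by
  have hπ : 0 < Real.pi := Real.pi_pos
  set x := ξ ^ 2 - ω with hx
  have hd : ∀ k : ℕ, 0 < α ^ 2 * x + ((k : ℝ) + 1) ^ 2 * Real.pi ^ 2 :=
    aux_denom_pos' α hα ω hω ξ
  set δ : ℝ := min (Real.pi ^ 2) (α ^ 2 * x + Real.pi ^ 2) with hδ
  have hδpos : 0 < δ := by
    have := hd 0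
    simp only [Nat.cast_zero] at this
    refine lt_min (by positivity) (by nlinarith)
  have hbound : ∀ k : ℕ, ((k : ℝ) + 1) ^ 2 * δ ≤ α ^ 2 * x + ((k : ℝ) + 1) ^ 2 * Real.pi ^ 2 := by
    intro k
    have hk : (1 : ℝ) ≤ ((k : ℝ) + 1) ^ 2 := by nlinarith [Nat.cast_nonneg (α := ℝ) k]
    rcases le_or_gt 0 (α ^ 2 * x) with h | h
    · calc ((k : ℝ) + 1) ^ 2 * δ ≤ ((k : ℝ) + 1) ^ 2 * Real.pi ^ 2 := by
            apply mul_le_mul_of_nonneg_left (min_le_left _ _) (by positivity)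
        _ ≤ _ := by linarith
    · calc ((k : ℝ) + 1) ^ 2 * δ ≤ ((k : ℝ) + 1) ^ 2 * (α ^ 2 * x + Real.pi ^ 2) := by
            apply mul_le_mul_of_nonneg_left (min_le_right _ _) (by positivity)
        _ ≤ _ := by nlinarith
  apply Summable.of_abs
  apply Summable.of_nonneg_of_le (fun k => abs_nonneg _)
    (f := fun k : ℕ => (2 * α * |x| / δ) * (1 / ((k : ℝ) + 1) ^ 2))
  · intro k
    have hdk := hd k
    rw [abs_div, abs_of_pos hdk]
    have h1 : |2 * α * x| = 2 * α * |x| := by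
      rw [abs_mul, abs_of_pos (by linarith : (0:ℝ) < 2 * α)]
    rw [h1, mul_one_div, div_div]
    refine div_le_div_of_nonneg_left (by positivity) (by positivity) ?_
    calc δ * ((k : ℝ) + 1) ^ 2 = ((k : ℝ) + 1) ^ 2 * δ := by ring
      _ ≤ _ := hbound k
  · apply Summable.mul_left
    have : Summable (fun n : ℕ => 1 / ((n : ℝ)) ^ 2) :=
      Real.summable_one_div_nat_pow.mpr one_lt_two
    have h := (summable_nat_add_iff 1).mpr this
    apply h.congr
    intro n
    push_cast
    ring

/-- For fixed `ξ ∈ ℝ`, `ω ↦ m_ω(ξ)` (via the partial fraction series) is strictly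
decreasing: for `ω₁ < ω₂ < π²/α²`, `m_{ω₁}(ξ) > m_{ω₂}(ξ)`. -/
theorem m_strictly_decreasing_in_omega (α : ℝ) (hα : 0 < α) (ω₁ ω₂ : ℝ)
    (h12 : ω₁ < ω₂) (h2 : ω₂ < Real.pi ^ 2 / α ^ 2) (ξ : ℝ) :
    1 / α + ∑' k : ℕ,
        2 * α * (ξ ^ 2 - ω₂) / (α ^ 2 * (ξ ^ 2 - ω₂) + ((k : ℝ) + 1) ^ 2 * Real.pi ^ 2)
      < 1 / α + ∑' k : ℕ,
        2 * α * (ξ ^ 2 - ω₁) / (α ^ 2 * (ξ ^ 2 - ω₁) + ((k : ℝ) + 1) ^ 2 * Real.pi ^ 2) := by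
  have h1 : ω₁ < Real.pi ^ 2 / α ^ 2 := h12.trans h2
  have hd₁ := aux_denom_pos' α hα ω₁ h1 ξ
  have hd₂ := aux_denom_pos' α hα ω₂ h2 ξ
  have key : ∀ k : ℕ,
      2 * α * (ξ ^ 2 - ω₂) / (α ^ 2 * (ξ ^ 2 - ω₂) + ((k : ℝ) + 1) ^ 2 * Real.pi ^ 2)
      < 2 * α * (ξ ^ 2 - ω₁) / (α ^ 2 * (ξ ^ 2 - ω₁) + ((k : ℝ) + 1) ^ 2 * Real.pi ^ 2) := by
    intro k
    rw [div_lt_div_iff₀ (hd₂ k) (hd₁ k)]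
    have hc : 0 < ((k : ℝ) + 1) ^ 2 * Real.pi ^ 2 := by positivity
    nlinarith [mul_pos (mul_pos (by linarith : (0:ℝ) < 2 * α) hc) (by linarith : (0:ℝ) < ω₂ - ω₁)]
  have h := Summable.tsum_lt_tsum (f := fun k : ℕ =>
      2 * α * (ξ ^ 2 - ω₂) / (α ^ 2 * (ξ ^ 2 - ω₂) + ((k : ℝ) + 1) ^ 2 * Real.pi ^ 2))
    (fun k => (key k).le) (key 0) (aux_summable α hα ω₂ h2 ξ) (aux_summable α hα ω₁ h1 ξ)
  linarith
end

section
/- For x ∈ (−1,1), the principal value integral p.v. ∫_{−1}^1 √(1−y²)/(x−y) dy equals πx. -/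
open Filter Topology MeasureTheory
open Real


noncomputable def Nf (x y : ℝ) : ℝ := 1 - x*y + Real.sqrt (1 - x^2) * Real.sqrt (1 - y^2)

noncomputable def Ff (x y : ℝ) : ℝ :=
  x * Real.arcsin y - Real.sqrt (1 - y^2)
    + Real.sqrt (1 - x^2) * (Real.log (Nf x y) - Real.log (x - y))

lemma Nf_pos {x y : ℝ} (hx1 : -1 < x) (hx2 : x < 1) (hy1 : -1 ≤ y) (hy2 : y ≤ 1) :
    0 < Nf x y := by
  have h := Real.sqrt_nonneg (1 - x^2)
  have h' := Real.sqrt_nonneg (1 - y^2)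
  have : 0 < 1 - x*y := by nlinarith [mul_nonneg (by linarith : (0:ℝ) ≤ 1 - x) (by linarith : (0:ℝ) ≤ 1 + y), mul_nonneg (by linarith : (0:ℝ) ≤ 1 + x) (by linarith : (0:ℝ) ≤ 1 - y)]
  unfold Nf; nlinarith [mul_nonneg h h']

lemma Ff_deriv {x y : ℝ} (hx1 : -1 < x) (hx2 : x < 1) (hy1 : -1 < y) (hy2 : y < 1)
    (hne : y ≠ x) :
    HasDerivAt (Ff x) (Real.sqrt (1 - y^2) / (x - y)) y := by
  have hxy : x - y ≠ 0 := sub_ne_zero.mpr hne.symm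
  set s := Real.sqrt (1 - y^2) with hs_def
  set c := Real.sqrt (1 - x^2) with hc_def
  have h1y : (0:ℝ) < 1 - y^2 := by nlinarith
  have h1x : (0:ℝ) < 1 - x^2 := by nlinarith
  have hs_pos : 0 < s := Real.sqrt_pos.mpr h1y
  have hc_pos : 0 < c := Real.sqrt_pos.mpr h1x
  have hs2 : s^2 = 1 - y^2 := Real.sq_sqrt h1y.le
  have hc2 : c^2 = 1 - x^2 := Real.sq_sqrt h1x.le
  have hN_pos : 0 < Nf x y := Nf_pos hx1 hx2 hy1.le hy2.le
  -- derivative of sqrt(1-y^2)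
  have hpoly : HasDerivAt (fun y : ℝ => 1 - y^2) (-(2*y)) y := by
    simpa using ((hasDerivAt_pow 2 y).const_sub 1)
  have hsqrt : HasDerivAt (fun y : ℝ => Real.sqrt (1 - y^2)) (-y / s) y := by
    have := hpoly.sqrt (by positivity : (1:ℝ) - y^2 ≠ 0)
    convert this using 1
    rw [← hs_def]; field_simp
  have harcsin : HasDerivAt Real.arcsin (1 / s) y :=
    Real.hasDerivAt_arcsin (by linarith) (by linarith)
  have hNd : HasDerivAt (fun y => Nf x y) (-x + c * (-y / s)) y := by
    have h1 : HasDerivAt (fun y : ℝ => 1 - x*y) (-x) y := by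
      simpa using ((hasDerivAt_id y).const_mul x).const_sub 1
    exact (h1.add (hsqrt.const_mul c))
  have hlogN : HasDerivAt (fun y => Real.log (Nf x y)) ((-x + c * (-y / s)) / Nf x y) y :=
    hNd.log hN_pos.ne'
  have hxyd : HasDerivAt (fun y : ℝ => x - y) (-1) y := by
    simpa using (hasDerivAt_id y).const_sub x
  have hlogxy : HasDerivAt (fun y => Real.log (x - y)) (-1 / (x - y)) y := hxyd.log hxy
  have hF : HasDerivAt (Ff x)
      (x * (1/s) - (-y / s) + c * ((-x + c * (-y / s)) / Nf x y - -1 / (x - y))) y := by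
    exact (((harcsin.const_mul x).sub hsqrt).add ((hlogN.sub hlogxy).const_mul c))
  convert hF using 1
  have hNf : Nf x y = 1 - x*y + c*s := rfl
  rw [hNf]
  have hNne : 1 - x*y + c*s ≠ 0 := by rw [← hNf]; exact hN_pos.ne'
  field_simp
  have hNne' : 1 - x * y + s * c ≠ 0 := by rw [mul_comm s c]; exact hNne
  have key : (x - y) * (-(s * x) + -(y * c)) / (1 - x * y + s * c) = c - s := by
    rw [div_eq_iff hNne']; linear_combination c * hs2 - s * hc2
  rw [key]; linear_combination hs2 - hc2
lemma Ff_cont {x : ℝ} (hx1 : -1 < x) (hx2 : x < 1) :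
    ContinuousOn (Ff x) (Set.Icc (-1 : ℝ) 1 \ {x}) := by
  apply ContinuousOn.add
  · apply ContinuousOn.sub
    · exact (continuous_const.mul Real.continuous_arcsin).continuousOn
    · exact (Real.continuous_sqrt.comp (by continuity)).continuousOn
  · apply continuousOn_const.mul
    apply ContinuousOn.sub
    · intro y hy
      apply ContinuousAt.continuousWithinAt
      have hN : Nf x y ≠ 0 := (Nf_pos hx1 hx2 hy.1.1 hy.1.2).ne'
      exact (Real.continuousAt_log hN).comp (by unfold Nf; fun_prop)
    · intro y hy
      apply ContinuousAt.continuousWithinAt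
      have : x - y ≠ 0 := sub_ne_zero.mpr (fun h => hy.2 (by simp [h.symm]))
      exact (Real.continuousAt_log this).comp (by fun_prop)

lemma Ff_neg_one {x : ℝ} : Ff x (-1) = -(Real.pi/2 * x) := by
  unfold Ff Nf
  rw [Real.arcsin_neg_one, show (1:ℝ) - (-1:ℝ)^2 = 0 by norm_num, Real.sqrt_zero,
    show (1:ℝ) - x*(-1) + Real.sqrt (1-x^2)*0 = x - (-1) by ring, sub_self]
  ring

lemma Ff_one {x : ℝ} : Ff x 1 = Real.pi/2 * x := by
  unfold Ff Nf
  rw [Real.arcsin_one, show (1:ℝ) - (1:ℝ)^2 = 0 by norm_num, Real.sqrt_zero,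
    show x - (1:ℝ) = -(1 - x*1 + Real.sqrt (1-x^2)*0) by ring, Real.log_neg_eq_log, sub_self]
  ring

lemma f_contOn {x a b : ℝ} (hab : ∀ y ∈ Set.Icc a b, x - y ≠ 0) :
    ContinuousOn (fun y => Real.sqrt (1 - y^2) / (x - y)) (Set.Icc a b) := by
  apply ContinuousOn.div
  · exact (Real.continuous_sqrt.comp (by fun_prop)).continuousOn
  · exact (by fun_prop : Continuous fun y : ℝ => x - y).continuousOn
  · exact hab

lemma ftc_left {x : ℝ} (hx1 : -1 < x) (hx2 : x < 1) {ε : ℝ} (hε : 0 < ε)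
    (hεb : -1 < x - ε) :
    ∫ y in (-1)..(x - ε), Real.sqrt (1 - y^2) / (x - y) = Ff x (x - ε) - Ff x (-1) := by
  apply intervalIntegral.integral_eq_sub_of_hasDerivAt_of_le (by linarith)
  · apply (Ff_cont hx1 hx2).mono
    intro y hy
    refine ⟨⟨hy.1, by nlinarith [hy.2]⟩, ?_⟩
    simp only [Set.mem_singleton_iff]
    intro h; rw [h] at hy; nlinarith [hy.2]
  · intro y hy
    exact Ff_deriv hx1 hx2 hy.1 (by nlinarith [hy.2]) (by nlinarith [hy.2])
  · apply ContinuousOn.intervalIntegrable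
    rw [Set.uIcc_of_le (by linarith)]
    exact f_contOn (fun y hy => sub_ne_zero.mpr (by nlinarith [hy.2]))

lemma ftc_right {x : ℝ} (hx1 : -1 < x) (hx2 : x < 1) {ε : ℝ} (hε : 0 < ε)
    (hεb : x + ε < 1) :
    ∫ y in (x + ε)..1, Real.sqrt (1 - y^2) / (x - y) = Ff x 1 - Ff x (x + ε) := by
  apply intervalIntegral.integral_eq_sub_of_hasDerivAt_of_le (by linarith)
  · apply (Ff_cont hx1 hx2).mono
    intro y hy
    refine ⟨⟨by nlinarith [hy.1], hy.2⟩, ?_⟩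
    simp only [Set.mem_singleton_iff]
    intro h; rw [h] at hy; nlinarith [hy.1]
  · intro y hy
    exact Ff_deriv hx1 hx2 (by nlinarith [hy.1]) hy.2 (by nlinarith [hy.1])
  · apply ContinuousOn.intervalIntegrable
    rw [Set.uIcc_of_le (by linarith)]
    exact f_contOn (fun y hy => sub_ne_zero.mpr (by nlinarith [hy.1]))

/-- For `x ∈ (-1,1)`, the principal value `p.v. ∫_{-1}^1 √(1-y²)/(x-y) dy = πx`. -/
theorem pv_integral_sqrt (x : ℝ) (hx : x ∈ Set.Ioo (-1 : ℝ) 1) :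
    Tendsto (fun ε : ℝ =>
        ∫ y in {y : ℝ | y ∈ Set.Ioo (-1 : ℝ) 1 ∧ ε ≤ |x - y|},
          Real.sqrt (1 - y ^ 2) / (x - y))
      (𝓝[>] 0) (𝓝 (Real.pi * x)) := by
  obtain ⟨hx1, hx2⟩ := hx
  set c := Real.sqrt (1 - x^2) with hc_def
  set G : ℝ → ℝ := fun ε =>
    x * (Real.arcsin (x - ε) - Real.arcsin (x + ε))
      - (Real.sqrt (1 - (x - ε)^2) - Real.sqrt (1 - (x + ε)^2))
      + c * (Real.log (Nf x (x - ε)) - Real.log (Nf x (x + ε))) with hG_def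
  have hδ : (0:ℝ) < min (1 - x) (x + 1) := by
    apply lt_min <;> linarith
  -- eventual equality
  have hEv : ∀ᶠ ε in 𝓝[>] (0:ℝ),
      (∫ y in {y : ℝ | y ∈ Set.Ioo (-1 : ℝ) 1 ∧ ε ≤ |x - y|},
          Real.sqrt (1 - y ^ 2) / (x - y)) = Real.pi * x + G ε := by
    filter_upwards [Ioo_mem_nhdsGT_of_mem (Set.mem_Ico.mpr ⟨le_refl 0, hδ⟩)] with ε hε
    obtain ⟨hε0, hεδ⟩ := hε
    have hε1 : ε < 1 - x := lt_of_lt_of_le hεδ (min_le_left _ _)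
    have hε2 : ε < x + 1 := lt_of_lt_of_le hεδ (min_le_right _ _)
    have hseteq : {y : ℝ | y ∈ Set.Ioo (-1 : ℝ) 1 ∧ ε ≤ |x - y|}
        = Set.Ioc (-1) (x - ε) ∪ Set.Ico (x + ε) 1 := by
      ext y
      simp only [Set.mem_setOf_eq, Set.mem_Ioo, Set.mem_union, Set.mem_Ioc, Set.mem_Ico]
      constructor
      · rintro ⟨⟨h1, h2⟩, h3⟩
        rcases le_abs.mp h3 with h | h
        · exact Or.inl ⟨h1, by linarith⟩
        · exact Or.inr ⟨by linarith, h2⟩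
      · rintro (⟨h1, h2⟩ | ⟨h1, h2⟩)
        · exact ⟨⟨h1, by linarith⟩, le_abs.mpr (Or.inl (by linarith))⟩
        · exact ⟨⟨by linarith, h2⟩, le_abs.mpr (Or.inr (by linarith))⟩
    rw [hseteq]
    have hint1 : IntegrableOn (fun y => Real.sqrt (1 - y^2) / (x - y))
        (Set.Ioc (-1) (x - ε)) := by
      apply ((f_contOn (a := -1) (b := x - ε)
        (fun y hy => sub_ne_zero.mpr (by nlinarith [hy.2]))).integrableOn_Icc).mono_set
      exact Set.Ioc_subset_Icc_self
    have hint2 : IntegrableOn (fun y => Real.sqrt (1 - y^2) / (x - y))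
        (Set.Ico (x + ε) 1) := by
      apply ((f_contOn (a := x + ε) (b := 1)
        (fun y hy => sub_ne_zero.mpr (by nlinarith [hy.1]))).integrableOn_Icc).mono_set
      exact Set.Ico_subset_Icc_self
    rw [setIntegral_union (by
        apply Set.disjoint_left.mpr
        intro y hy hy'
        simp only [Set.mem_Ioc, Set.mem_Ico] at hy hy'
        linarith [hy.2, hy'.1]) measurableSet_Ico hint1 hint2]
    have e1 : ∫ y in Set.Ioc (-1 : ℝ) (x - ε), Real.sqrt (1 - y^2) / (x - y)
        = ∫ y in (-1)..(x - ε), Real.sqrt (1 - y^2) / (x - y) :=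
      (intervalIntegral.integral_of_le (by linarith)).symm
    have e2 : ∫ y in Set.Ico (x + ε) 1, Real.sqrt (1 - y^2) / (x - y)
        = ∫ y in (x + ε)..1, Real.sqrt (1 - y^2) / (x - y) := by
      rw [integral_Ico_eq_integral_Ioo, intervalIntegral.integral_of_le (by linarith),
        integral_Ioc_eq_integral_Ioo]
    rw [e1, e2, ftc_left hx1 hx2 hε0 (by linarith), ftc_right hx1 hx2 hε0 (by linarith),
      Ff_neg_one, Ff_one]
    have hFdiff : Ff x (x - ε) - Ff x (x + ε) = G ε := by
      simp only [hG_def]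
      unfold Ff
      rw [show x - (x - ε) = ε by ring, show x - (x + ε) = -ε by ring, Real.log_neg_eq_log]
      ring
    linear_combination hFdiff
  -- limit of the model function
  have hG0 : Tendsto G (𝓝[>] (0:ℝ)) (𝓝 0) := by
    have hNx : Nf x x ≠ 0 := (Nf_pos hx1 hx2 (by linarith) (by linarith)).ne'
    have hNcont : Continuous (Nf x) := by unfold Nf; fun_prop
    have t1 : Tendsto (fun ε : ℝ => x - ε) (𝓝 0) (𝓝 x) := by
      have h : Continuous (fun ε : ℝ => x - ε) := by fun_prop
      simpa using h.tendsto 0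
    have t2 : Tendsto (fun ε : ℝ => x + ε) (𝓝 0) (𝓝 x) := by
      have h : Continuous (fun ε : ℝ => x + ε) := by fun_prop
      simpa using h.tendsto 0
    have ta1 : Tendsto (fun ε : ℝ => Real.arcsin (x - ε)) (𝓝 0) (𝓝 (Real.arcsin x)) :=
      (Real.continuous_arcsin.tendsto x).comp t1
    have ta2 : Tendsto (fun ε : ℝ => Real.arcsin (x + ε)) (𝓝 0) (𝓝 (Real.arcsin x)) :=
      (Real.continuous_arcsin.tendsto x).comp t2
    have ts1 : Tendsto (fun ε : ℝ => Real.sqrt (1 - (x - ε)^2)) (𝓝 0)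
        (𝓝 (Real.sqrt (1 - x^2))) := by
      apply (Real.continuous_sqrt.tendsto _).comp
      have h : Continuous (fun ε : ℝ => 1 - (x - ε)^2) := by fun_prop
      simpa using h.tendsto 0
    have ts2 : Tendsto (fun ε : ℝ => Real.sqrt (1 - (x + ε)^2)) (𝓝 0)
        (𝓝 (Real.sqrt (1 - x^2))) := by
      apply (Real.continuous_sqrt.tendsto _).comp
      have h : Continuous (fun ε : ℝ => 1 - (x + ε)^2) := by fun_prop
      simpa using h.tendsto 0
    have tl1 : Tendsto (fun ε : ℝ => Real.log (Nf x (x - ε))) (𝓝 0)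
        (𝓝 (Real.log (Nf x x))) :=
      ((Real.continuousAt_log hNx).tendsto).comp ((hNcont.tendsto x).comp t1)
    have tl2 : Tendsto (fun ε : ℝ => Real.log (Nf x (x + ε))) (𝓝 0)
        (𝓝 (Real.log (Nf x x))) :=
      ((Real.continuousAt_log hNx).tendsto).comp ((hNcont.tendsto x).comp t2)
    have hGt : Tendsto G (𝓝 0) (𝓝 (x * (Real.arcsin x - Real.arcsin x)
        - (Real.sqrt (1 - x^2) - Real.sqrt (1 - x^2))
        + c * (Real.log (Nf x x) - Real.log (Nf x x)))) := by
      simp only [hG_def]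
      exact (((ta1.sub ta2).const_mul x).sub (ts1.sub ts2)).add ((tl1.sub tl2).const_mul c)
    have : Tendsto G (𝓝 0) (𝓝 0) := by simpa using hGt
    exact this.mono_left nhdsWithin_le_nhds
  have : Tendsto (fun ε => Real.pi * x + G ε) (𝓝[>] (0:ℝ)) (𝓝 (Real.pi * x)) := by
    have := (tendsto_const_nhds (x := Real.pi * x) (f := 𝓝[>] (0:ℝ))).add hG0
    simpa using this
  exact this.congr' (hEv.mono fun ε h => h.symm)
end

section
/- Let ψ(z) = ∫_{−1}^1 ln|z−x| √(1−x²) dx for z ∈ (−1,1). Then ψ(z) = πz²/2 − (π/2)(1/2 + ln 2), and consequently ∫_{−1}^1 ∫_{−1}^1 ln|z−x| √(1−x²) √(1−z²) dx dz = (π²/16)(−1 − ln 16). -/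
open Real MeasureTheory intervalIntegral Set Filter Topology

lemma ae_ne_vol (c : ℝ) : ∀ᵐ x : ℝ, x ≠ c := by
  refine (MeasureTheory.ae_iff ..).2 ?_ <;> simp [not_not]

lemma logabs_ii (a b : ℝ) : IntervalIntegrable (fun x => Real.log |x|) volume a b := by
  suffices H : ∀ c : ℝ, IntervalIntegrable (fun x => Real.log |x|) volume 0 c by
    exact (H a).symm.trans (H b)
  have H0 : ∀ c : ℝ, 0 ≤ c → IntervalIntegrable (fun x => Real.log |x|) volume 0 c := by
    intro c hc
    apply IntervalIntegrable.mono_fun'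
      (g := fun x : ℝ => 2 * x ^ (-(2⁻¹) : ℝ) + 2 * x ^ ((2⁻¹) : ℝ))
    · exact ((intervalIntegrable_rpow' (by norm_num)).const_mul 2).add
        ((intervalIntegrable_rpow' (by norm_num)).const_mul 2)
    · exact (Real.measurable_log.comp measurable_abs).aestronglyMeasurable
    · rw [uIoc_of_le hc]
      filter_upwards [ae_restrict_mem measurableSet_Ioc] with x hx
      have hx0 : (0:ℝ) < x := hx.1
      set s : ℝ := x ^ ((2⁻¹) : ℝ) with hs
      have hspos : 0 < s := Real.rpow_pos_of_pos hx0 _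
      have hlog : Real.log x = 2 * Real.log s := by
        rw [hs, Real.log_rpow hx0]; ring
      have h1 : Real.log s ≤ s := (Real.log_le_sub_one_of_pos hspos).trans (by linarith)
      have h2 : -Real.log s ≤ s⁻¹ := by
        rw [← Real.log_inv]
        exact (Real.log_le_sub_one_of_pos (by positivity)).trans (by linarith [inv_pos.2 hspos])
      have hneg : x ^ (-(2⁻¹) : ℝ) = s⁻¹ := by
        rw [hs, ← Real.rpow_neg hx0.le]
      show ‖Real.log |x|‖ ≤ _
      rw [Real.norm_eq_abs, abs_of_pos hx0, hlog, hneg]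
      have hip : (0:ℝ) < s⁻¹ := inv_pos.2 hspos
      have habs : |2 * Real.log s| ≤ 2 * (s⁻¹ + s) := by
        rw [abs_mul, abs_two]
        have : |Real.log s| ≤ s⁻¹ + s := by
          rw [abs_le]; constructor <;> linarith
        linarith
      calc |2 * Real.log s| ≤ 2 * (s⁻¹ + s) := habs
        _ = 2 * s⁻¹ + 2 * s := by ring
  intro c
  rcases le_or_gt 0 c with h | h
  · exact H0 c h
  · have := (H0 (-c) (by linarith)).comp_mul_left (c := -1)
    simpa using this

lemma logabs_shift_ii (c a b : ℝ) :
    IntervalIntegrable (fun x => Real.log |x - c|) volume a b := by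
  simpa using (logabs_ii (a - c) (b - c)).comp_sub_right c

lemma jordan_log {t : ℝ} (ht : |t| ≤ π / 2) :
    Real.log |t| ≤ Real.log (π / 2) + Real.log |Real.sin t| := by
  rcases eq_or_ne t 0 with rfl | htne
  · simp
    exact Real.log_nonneg (by linarith [Real.pi_gt_three])
  · have h0 : 0 < |t| := abs_pos.2 htne
    have hsin : 2 / π * |t| ≤ |Real.sin t| := by
      rcases le_or_gt 0 t with h | h
      · rw [abs_of_nonneg h, abs_of_nonneg (Real.sin_nonneg_of_nonneg_of_le_pi h
          (by linarith [Real.pi_pos, abs_of_nonneg h]))]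
        exact Real.mul_le_sin h (by rwa [abs_of_nonneg h] at ht)
      · have h1 : 0 ≤ -t := by linarith
        have ht' : -t ≤ π / 2 := by rwa [abs_of_neg h] at ht
        have hsabs : |Real.sin t| = Real.sin (-t) := by
          rw [← abs_neg, ← Real.sin_neg]
          exact abs_of_nonneg (Real.sin_nonneg_of_nonneg_of_le_pi h1
            (by linarith [Real.pi_pos]))
        rw [abs_of_neg h, hsabs]
        exact Real.mul_le_sin h1 ht'
    have hpi : (0:ℝ) < π := Real.pi_pos
    have key : (π / 2) * (2 / π * |t|) = |t| := by field_simp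
    calc Real.log |t| = Real.log ((π/2) * (2 / π * |t|)) := by rw [key]
      _ = Real.log (π/2) + Real.log (2 / π * |t|) :=
          Real.log_mul (by positivity) (by positivity)
      _ ≤ Real.log (π/2) + Real.log |Real.sin t| :=
          add_le_add (le_refl _) (Real.log_le_log (by positivity) hsin)

lemma log_abs_le {x c : ℝ} (hc : 1 ≤ c) (h : |x| ≤ c) : Real.log |x| ≤ Real.log c := by
  rcases eq_or_ne x 0 with rfl | hx
  · simpa using Real.log_nonneg hc
  · exact Real.log_le_log (abs_pos.2 hx) h

lemma logsin_main : IntervalIntegrable (fun u => Real.log |Real.sin u|) volume (-(π/2)) (3*(π/2)) := by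
  have hpi : (0:ℝ) < π := Real.pi_pos
  apply IntervalIntegrable.mono_fun'
    (g := fun u : ℝ => (Real.log (π/2) + 2 * Real.log (3*(π/2))) - Real.log |u| - Real.log |u - π|)
  · exact ((_root_.intervalIntegrable_const).sub (logabs_ii _ _)).sub (logabs_shift_ii π _ _)
  · exact ((Real.measurable_log.comp (measurable_abs.comp Real.measurable_sin))).aestronglyMeasurable
  · rw [uIoc_of_le (by linarith)]
    filter_upwards [ae_restrict_mem measurableSet_Ioc] with u hu
    have hu1 : -(π/2) < u := hu.1
    have hu2 : u ≤ 3*(π/2) := hu.2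
    have hsle : |Real.sin u| ≤ 1 := abs_sin_le_one u
    have hlogsin : Real.log |Real.sin u| ≤ 0 := Real.log_nonpos (abs_nonneg _) hsle
    have hc1 : (1:ℝ) ≤ 3*(π/2) := by linarith [Real.pi_gt_three]
    show ‖Real.log |Real.sin u|‖ ≤ _
    rw [Real.norm_eq_abs, abs_of_nonpos hlogsin]
    rcases le_or_gt u (π/2) with h | h
    · have j := jordan_log (t := u) (abs_le.2 ⟨by linarith, h⟩)
      have b2 : Real.log |u - π| ≤ Real.log (3*(π/2)) := log_abs_le hc1 (abs_le.2 ⟨by linarith, by linarith⟩)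
      have hl3 : 0 ≤ Real.log (3*(π/2)) := Real.log_nonneg hc1
      linarith
    · have hs : |Real.sin u| = |Real.sin (u - π)| := by
        rw [Real.sin_sub_pi, abs_neg]
      have j := jordan_log (t := u - π) (abs_le.2 ⟨by linarith, by linarith⟩)
      have b2 : Real.log |u| ≤ Real.log (3*(π/2)) := log_abs_le hc1 (abs_le.2 ⟨by linarith, by linarith⟩)
      have hl3 : 0 ≤ Real.log (3*(π/2)) := Real.log_nonneg hc1
      rw [hs]
      linarith

lemma logsin_ii {a b : ℝ} (ha : a ∈ Icc (-(π/2)) (3*(π/2))) (hb : b ∈ Icc (-(π/2)) (3*(π/2))) :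
    IntervalIntegrable (fun u => Real.log |Real.sin u|) volume a b := by
  have h2 : uIcc a b ⊆ Icc (-(π/2)) (3*(π/2)) := uIcc_subset_Icc ha hb
  have h3 : Icc (-(π/2)) (3*(π/2)) = uIcc (-(π/2)) (3*(π/2)) :=
    (uIcc_of_le (by linarith [Real.pi_pos])).symm
  exact logsin_main.mono_set (h3 ▸ h2)

lemma integral_logsin_pi : ∫ u in (0:ℝ)..π, Real.log |Real.sin u| = -(π * Real.log 2) := by
  have hpi := Real.pi_pos
  set f : ℝ → ℝ := fun u => Real.log |Real.sin u| with hf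
  have m0 : (0:ℝ) ∈ Icc (-(π/2)) (3*(π/2)) := by constructor <;> linarith
  have mh : (π/2) ∈ Icc (-(π/2)) (3*(π/2)) := by constructor <;> linarith
  have mp : π ∈ Icc (-(π/2)) (3*(π/2)) := by constructor <;> linarith
  have i1 : IntervalIntegrable f volume 0 (π/2) := logsin_ii m0 mh
  have i2 : IntervalIntegrable f volume (π/2) π := logsin_ii mh mp
  have hcos_eq : (fun v : ℝ => f (π/2 - v)) = fun v => Real.log |Real.cos v| := by
    funext v; simp only [hf, Real.sin_pi_div_two_sub]
  have icos : IntervalIntegrable (fun v => Real.log |Real.cos v|) volume 0 (π/2) := by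
    rw [← hcos_eq]
    have h := (logsin_ii mh m0).comp_sub_left (π/2)
    rw [sub_self, sub_zero] at h
    exact h
  have hJ' : ∫ v in (0:ℝ)..(π/2), Real.log |Real.cos v| = ∫ v in (0:ℝ)..(π/2), f v := by
    rw [← hcos_eq]
    have := intervalIntegral.integral_comp_sub_left (a := 0) (b := π/2) f (π/2)
    simpa using this
  have hsecond : ∫ u in (π/2)..π, f u = ∫ v in (0:ℝ)..(π/2), f v := by
    have h1 : (fun x : ℝ => f (π - x)) = f := by
      funext x; simp only [hf, Real.sin_pi_sub]
    have h := intervalIntegral.integral_comp_sub_left (a := 0) (b := π/2) f π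
    rw [h1] at h
    rw [show π - π/2 = π/2 by ring, sub_zero] at h
    exact h.symm
  have hsplit : ∫ u in (0:ℝ)..π, f u = (∫ v in (0:ℝ)..(π/2), f v) + ∫ u in (π/2)..π, f u :=
    (intervalIntegral.integral_add_adjacent_intervals i1 i2).symm
  have hdbl : ∫ v in (0:ℝ)..(π/2), f (2*v) = 2⁻¹ * ∫ u in (0:ℝ)..π, f u := by
    have h := intervalIntegral.integral_comp_mul_left (a := 0) (b := π/2) f (c := 2) two_ne_zero
    rw [show (2:ℝ) * (π/2) = π by ring, mul_zero] at h
    rw [h, smul_eq_mul]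
  have hsum : ∫ v in (0:ℝ)..(π/2), f (2*v)
      = ∫ v in (0:ℝ)..(π/2), (Real.log 2 + (f v + Real.log |Real.cos v|)) := by
    apply intervalIntegral.integral_congr_ae
    filter_upwards [ae_ne_vol (π/2)] with v hne hv
    rw [uIoc_of_le (by linarith : (0:ℝ) ≤ π/2)] at hv
    have hsv : Real.sin v ≠ 0 := ne_of_gt (Real.sin_pos_of_pos_of_lt_pi hv.1 (by linarith [hv.2]))
    have hcv : Real.cos v ≠ 0 :=
      ne_of_gt (Real.cos_pos_of_mem_Ioo ⟨by linarith [hv.1], lt_of_le_of_ne hv.2 hne⟩)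
    simp only [hf]
    rw [Real.sin_two_mul, abs_mul, abs_mul, abs_two,
      Real.log_mul (mul_ne_zero two_ne_zero (abs_ne_zero.2 hsv)) (abs_ne_zero.2 hcv),
      Real.log_mul two_ne_zero (abs_ne_zero.2 hsv)]
    ring
  rw [intervalIntegral.integral_add intervalIntegrable_const (i1.add icos),
    intervalIntegral.integral_add i1 icos, intervalIntegral.integral_const] at hsum
  rw [hdbl] at hsum
  rw [hJ'] at hsum
  rw [hsplit, hsecond]
  have : (π/2 - 0) • Real.log 2 = (π/2) * Real.log 2 := by rw [smul_eq_mul]; ring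
  rw [this] at hsum
  linarith [hsum]

lemma sin_four_pi_sub (x : ℝ) : Real.sin (4*(π - x)) = -Real.sin (4*x) := by
  rw [show 4*(π-x) = (-(4*x) + 2*π) + 2*π by ring, Real.sin_add_two_pi, Real.sin_add_two_pi,
    Real.sin_neg]

lemma integral_logsin_sin4 : ∫ u in (0:ℝ)..π, Real.log |Real.sin u| * Real.sin (4*u) = 0 := by
  set g : ℝ → ℝ := fun u => Real.log |Real.sin u| * Real.sin (4*u) with hg
  have h1 : (fun x : ℝ => g (π - x)) = fun x => -(g x) := by
    funext x
    simp only [hg, Real.sin_pi_sub, sin_four_pi_sub]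
    ring
  have h := intervalIntegral.integral_comp_sub_left (a := 0) (b := π) g π
  rw [h1, sub_self, sub_zero, intervalIntegral.integral_neg] at h
  linarith

lemma sin4_id (y : ℝ) : Real.sin (4*y) = 4 * (Real.sin y * Real.cos y * Real.cos (2*y)) := by
  rw [show (4:ℝ)*y = 2*(2*y) by ring, Real.sin_two_mul, Real.sin_two_mul]; ring

lemma integral_logsin_cos4 : ∫ u in (0:ℝ)..π, Real.log |Real.sin u| * Real.cos (4*u) = -(π/4) := by
  have hpi := Real.pi_pos
  have m0 : (0:ℝ) ∈ Icc (-(π/2)) (3*(π/2)) := by constructor <;> linarith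
  have mp : π ∈ Icc (-(π/2)) (3*(π/2)) := by constructor <;> linarith
  set F : ℝ → ℝ := fun u => Real.negMulLog (Real.sin u) * (-(Real.cos u * Real.cos (2*u)))
      - Real.sin (2*u)/4 - u/4 - Real.sin (4*u)/16 with hF
  set G : ℝ → ℝ := fun u => Real.log (Real.sin u) * (Real.sin (4*u)/4)
      - Real.sin (2*u)/4 - u/4 - Real.sin (4*u)/16 with hG
  have hGF : EqOn F G (Ioo 0 π) := by
    intro y _
    simp only [hF, hG, Real.negMulLog]
    rw [sin4_id y]
    ring
  have hint : IntervalIntegrable (fun u => Real.log |Real.sin u| * Real.cos (4*u)) volume 0 π :=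
    (logsin_ii m0 mp).mul_continuousOn (Continuous.continuousOn (by fun_prop))
  have hcont : ContinuousOn F (Icc 0 π) := by
    apply Continuous.continuousOn
    simp only [hF]
    fun_prop
  have hderiv : ∀ x ∈ Ioo (0:ℝ) π, HasDerivAt F (Real.log |Real.sin x| * Real.cos (4*x)) x := by
    intro x hx
    have hs : 0 < Real.sin x := Real.sin_pos_of_pos_of_lt_pi hx.1 hx.2
    have hs4 : HasDerivAt (fun u : ℝ => Real.sin (4*u)) (Real.cos (4*x) * 4) x := by
      exact (Real.hasDerivAt_sin (4*x)).comp x (by simpa using (hasDerivAt_id x).const_mul (4:ℝ))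
    have hs2 : HasDerivAt (fun u : ℝ => Real.sin (2*u)) (Real.cos (2*x) * 2) x := by
      exact (Real.hasDerivAt_sin (2*x)).comp x (by simpa using (hasDerivAt_id x).const_mul (2:ℝ))
    have hlogsin : HasDerivAt (fun u : ℝ => Real.log (Real.sin u))
        (Real.cos x / Real.sin x) x := (Real.hasDerivAt_sin x).log (ne_of_gt hs)
    have hGd : HasDerivAt G ((Real.cos x / Real.sin x) * (Real.sin (4*x)/4)
        + Real.log (Real.sin x) * ((Real.cos (4*x) * 4)/4)
        - (Real.cos (2*x) * 2)/4 - 1/4 - (Real.cos (4*x) * 4)/16) x := by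
      have h := (((hlogsin.mul (hs4.div_const 4)).sub (hs2.div_const 4)).sub
        ((hasDerivAt_id x).div_const 4)).sub (hs4.div_const 16)
      simp at h ⊢
      exact h
    have heq : (Real.cos x / Real.sin x) * (Real.sin (4*x)/4)
        + Real.log (Real.sin x) * ((Real.cos (4*x) * 4)/4)
        - (Real.cos (2*x) * 2)/4 - 1/4 - (Real.cos (4*x) * 4)/16
        = Real.log |Real.sin x| * Real.cos (4*x) := by
      rw [abs_of_pos hs, sin4_id x,
        show Real.cos (4*x) = 2*(Real.cos (2*x))^2 - 1 by
          rw [show (4:ℝ)*x = 2*(2*x) by ring, Real.cos_two_mul],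
        Real.cos_two_mul]
      field_simp
      ring
    rw [heq] at hGd
    exact hGd.congr_of_eventuallyEq (Filter.eventuallyEq_of_mem (Ioo_mem_nhds hx.1 hx.2) hGF)
  have h := intervalIntegral.integral_eq_sub_of_hasDerivAt_of_le hpi.le hcont hderiv hint
  rw [h]
  have hFpi : F π = -(π/4) := by
    simp only [hF]
    rw [show (4:ℝ)*π = 2*π + 2*π by ring, show (2:ℝ)*π = 0 + 2*π by ring]
    simp [Real.sin_add_two_pi]
  have hF0 : F 0 = 0 := by simp [hF]
  rw [hFpi, hF0]
  ring

lemma ii_comp_affine {f : ℝ → ℝ} {a b : ℝ} (hf : IntervalIntegrable f volume a b)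
    {c d A B : ℝ} (hc : c ≠ 0) (hA : c*A + d = a) (hB : c*B + d = b) :
    IntervalIntegrable (fun x => f (c*x + d)) volume A B := by
  have h1 := (hf.comp_add_right d).comp_mul_left (c := c)
  have e1 : (a - d)/c = A := by rw [← hA, add_sub_cancel_right, mul_div_cancel_left₀ _ hc]
  have e2 : (b - d)/c = B := by rw [← hB, add_sub_cancel_right, mul_div_cancel_left₀ _ hc]
  rwa [e1, e2] at h1

lemma ii_comp_affine' {f g : ℝ → ℝ} {a b : ℝ} (hf : IntervalIntegrable f volume a b)
    {c d A B : ℝ} (hc : c ≠ 0) (hA : c*A + d = a) (hB : c*B + d = b)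
    (hg : ∀ x, g x = f (c*x + d)) : IntervalIntegrable g volume A B := by
  have h := ii_comp_affine hf hc hA hB
  rwa [show g = fun x => f (c*x+d) from funext hg]

lemma cos_image_Ioo : Real.cos '' (Ioo 0 π) = Ioo (-1:ℝ) 1 := by
  apply Subset.antisymm
  · rintro y ⟨θ, hθ, rfl⟩
    have hmt : θ ∈ Icc (0:ℝ) π := Ioo_subset_Icc_self hθ
    constructor
    · have := Real.strictAntiOn_cos hmt (right_mem_Icc.2 Real.pi_pos.le) hθ.2
      simpa [Real.cos_pi] using this
    · have := Real.strictAntiOn_cos (left_mem_Icc.2 Real.pi_pos.le) hmt hθ.1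
      simpa [Real.cos_zero] using this
  · rintro y hy
    have hlt : Real.arccos y < π := by
      have h1 : -(π/2) < Real.arcsin y := Real.neg_pi_div_two_lt_arcsin.2 hy.1
      simp only [Real.arccos]
      linarith
    exact ⟨Real.arccos y, ⟨Real.arccos_pos.2 hy.2, hlt⟩, Real.cos_arccos hy.1.le hy.2.le⟩

lemma psi_cov {z : ℝ} (hz : z ∈ Ioo (-1:ℝ) 1) :
    ∫ x in (-1:ℝ)..1, Real.log |z - x| * Real.sqrt (1 - x^2)
      = ∫ θ in (0:ℝ)..π, Real.log |z - Real.cos θ| * Real.sin θ ^ 2 := by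
  have hder : ∀ x ∈ Ioo (0:ℝ) π, HasDerivWithinAt Real.cos (-Real.sin x) (Ioo 0 π) x :=
    fun x _ => (Real.hasDerivAt_cos x).hasDerivWithinAt
  have hinj : InjOn Real.cos (Ioo 0 π) := Real.injOn_cos.mono Ioo_subset_Icc_self
  have hcv := MeasureTheory.integral_image_eq_integral_abs_deriv_smul measurableSet_Ioo hder hinj
    (fun x => Real.log |z - x| * Real.sqrt (1 - x^2))
  rw [cos_image_Ioo] at hcv
  rw [intervalIntegral.integral_of_le (by norm_num : (-1:ℝ) ≤ 1),
    MeasureTheory.integral_Ioc_eq_integral_Ioo,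
    intervalIntegral.integral_of_le Real.pi_pos.le,
    MeasureTheory.integral_Ioc_eq_integral_Ioo, hcv]
  apply MeasureTheory.setIntegral_congr_fun measurableSet_Ioo
  intro θ hθ
  have hsθ : 0 ≤ Real.sin θ := (Real.sin_pos_of_pos_of_lt_pi hθ.1 hθ.2).le
  have hsqrt : Real.sqrt (1 - Real.cos θ^2) = Real.sin θ := by
    rw [show (1:ℝ) - Real.cos θ^2 = Real.sin θ^2 by rw [Real.sin_sq]]
    exact Real.sqrt_sq hsθ
  simp only [smul_eq_mul]
  rw [abs_neg, abs_of_nonneg hsθ, hsqrt]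
  ring

lemma psi_val {z : ℝ} (hz : z ∈ Set.Ioo (-1:ℝ) 1) :
    ∫ x in (-1:ℝ)..1, Real.log |z - x| * Real.sqrt (1 - x^2)
      = π * z^2/2 - π/2 * (1/2 + Real.log 2) := by
  obtain ⟨hz1, hz2⟩ := hz
  have hpi := Real.pi_pos
  set φ := Real.arccos z with hφdef
  have hφ1 : 0 < φ := Real.arccos_pos.2 hz2
  have hφ2 : φ < π := by
    have h1 : -(π/2) < Real.arcsin z := Real.neg_pi_div_two_lt_arcsin.2 hz1
    simp only [hφdef, Real.arccos]; linarith
  have hcosφ : Real.cos φ = z := Real.cos_arccos hz1.le hz2.le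
  rw [psi_cov ⟨hz1, hz2⟩]
  -- membership helpers
  have mem1 : φ/2 ∈ Icc (-(π/2)) (3*(π/2)) := by constructor <;> [linarith; linarith]
  have mem2 : (π+φ)/2 ∈ Icc (-(π/2)) (3*(π/2)) := by constructor <;> [linarith; linarith]
  have mem3 : -(φ/2) ∈ Icc (-(π/2)) (3*(π/2)) := by constructor <;> [linarith; linarith]
  have mem4 : (π-φ)/2 ∈ Icc (-(π/2)) (3*(π/2)) := by constructor <;> [linarith; linarith]
  have mem5 : (φ-π)/2 ∈ Icc (-(π/2)) (3*(π/2)) := by constructor <;> [linarith; linarith]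
  have mem0 : (0:ℝ) ∈ Icc (-(π/2)) (3*(π/2)) := by constructor <;> [linarith; linarith]
  have memp : π ∈ Icc (-(π/2)) (3*(π/2)) := by constructor <;> [linarith; linarith]
  set fK : ℝ → ℝ := fun u => Real.log |Real.sin u| * (1 - Real.cos (4*u - 2*φ)) with hfK
  set fH : ℝ → ℝ := fun u => Real.log |Real.sin u| * (1 - Real.cos (4*u + 2*φ)) with hfH
  -- Step B : split the integrand a.e.
  have hsplit : ∫ θ in (0:ℝ)..π, Real.log |z - Real.cos θ| * Real.sin θ ^ 2
      = ∫ θ in (0:ℝ)..π, (Real.log 2 * Real.sin θ^2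
          + (Real.log |Real.sin ((θ+φ)/2)| * Real.sin θ^2
            + Real.log |Real.sin ((θ-φ)/2)| * Real.sin θ^2)) := by
    apply intervalIntegral.integral_congr_ae
    filter_upwards [ae_ne_vol φ] with θ hne hθ
    rw [uIoc_of_le hpi.le] at hθ
    have hθ1 : 0 < θ := hθ.1
    have hθ2 : θ ≤ π := hθ.2
    have hsp : 0 < Real.sin ((θ+φ)/2) :=
      Real.sin_pos_of_pos_of_lt_pi (by linarith) (by linarith)
    have hsm : Real.sin ((θ-φ)/2) ≠ 0 := by
      rcases lt_or_gt_of_ne hne with h | h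
      · have : 0 < Real.sin ((φ-θ)/2) :=
          Real.sin_pos_of_pos_of_lt_pi (by linarith) (by linarith)
        rw [show (θ-φ)/2 = -((φ-θ)/2) by ring, Real.sin_neg]
        exact neg_ne_zero.2 (ne_of_gt this)
      · exact ne_of_gt (Real.sin_pos_of_pos_of_lt_pi (by linarith) (by linarith))
    have hprod : z - Real.cos θ = 2 * Real.sin ((θ+φ)/2) * Real.sin ((θ-φ)/2) := by
      rw [← hcosφ, Real.cos_sub_cos,
        show (φ-θ)/2 = -((θ-φ)/2) by ring, Real.sin_neg, show (φ+θ)/2 = (θ+φ)/2 by ring]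
      ring
    rw [hprod, abs_mul, abs_mul, abs_two,
      Real.log_mul (mul_ne_zero two_ne_zero (abs_ne_zero.2 (ne_of_gt hsp))) (abs_ne_zero.2 hsm),
      Real.log_mul two_ne_zero (abs_ne_zero.2 (ne_of_gt hsp))]
    ring
  -- integrability of the three pieces
  have i1 : IntervalIntegrable (fun θ : ℝ => Real.log 2 * Real.sin θ^2) volume 0 π :=
    (Continuous.intervalIntegrable (by fun_prop) 0 π)
  have i2aff : IntervalIntegrable (fun θ : ℝ => Real.log |Real.sin ((θ+φ)/2)|) volume 0 π :=
    ii_comp_affine' (c := 2⁻¹) (d := φ/2) (logsin_ii mem1 mem2) (by norm_num) (by ring) (by ring)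
      (fun x => by rw [show (2⁻¹*x + φ/2 : ℝ) = (x+φ)/2 by ring])
  have i2 : IntervalIntegrable (fun θ : ℝ => Real.log |Real.sin ((θ+φ)/2)| * Real.sin θ^2)
      volume 0 π :=
    i2aff.mul_continuousOn (Continuous.continuousOn (by fun_prop))
  have i3aff : IntervalIntegrable (fun θ : ℝ => Real.log |Real.sin ((θ-φ)/2)|) volume 0 π :=
    ii_comp_affine' (c := 2⁻¹) (d := -(φ/2)) (logsin_ii mem3 mem4) (by norm_num) (by ring) (by ring)
      (fun x => by rw [show (2⁻¹*x + -(φ/2) : ℝ) = (x-φ)/2 by ring])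
  have i3 : IntervalIntegrable (fun θ : ℝ => Real.log |Real.sin ((θ-φ)/2)| * Real.sin θ^2)
      volume 0 π :=
    i3aff.mul_continuousOn (Continuous.continuousOn (by fun_prop))
  rw [hsplit, intervalIntegral.integral_add i1 (i2.add i3), intervalIntegral.integral_add i2 i3]
  -- first piece
  have hfirst : ∫ θ in (0:ℝ)..π, Real.log 2 * Real.sin θ^2 = Real.log 2 * (π/2) := by
    rw [intervalIntegral.integral_const_mul, integral_sin_sq]
    simp [Real.sin_pi]
  -- Step C : A+ as an integral of fK
  have hAplus : ∫ θ in (0:ℝ)..π, Real.log |Real.sin ((θ+φ)/2)| * Real.sin θ^2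
      = ∫ u in (φ/2)..((π+φ)/2), fK u := by
    have e1 : ∀ θ : ℝ, Real.log |Real.sin ((θ+φ)/2)| * Real.sin θ^2
        = 2⁻¹ * fK (2⁻¹*θ + φ/2) := by
      intro θ
      simp only [hfK]
      rw [show (2⁻¹*θ + φ/2 : ℝ) = (θ+φ)/2 by ring, show 4*((θ+φ)/2) - 2*φ = 2*θ by ring,
        Real.sin_sq_eq_half_sub θ]
      ring
    rw [intervalIntegral.integral_congr (fun θ _ => e1 θ), intervalIntegral.integral_const_mul,
      intervalIntegral.integral_comp_mul_add fK (by norm_num : (2⁻¹:ℝ) ≠ 0) (φ/2)]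
    rw [show (2⁻¹*0 + φ/2 : ℝ) = φ/2 by ring, show (2⁻¹*π + φ/2 : ℝ) = (π+φ)/2 by ring,
      smul_eq_mul]
    ring
  -- Step D : A- as an integral of fK
  have hAminus : ∫ θ in (0:ℝ)..π, Real.log |Real.sin ((θ-φ)/2)| * Real.sin θ^2
      = ∫ u in ((φ-π)/2)..(φ/2), fK u := by
    have e1 : ∀ θ : ℝ, Real.log |Real.sin ((θ-φ)/2)| * Real.sin θ^2
        = 2⁻¹ * fH (2⁻¹*θ + -(φ/2)) := by
      intro θ
      simp only [hfH]
      rw [show (2⁻¹*θ + -(φ/2) : ℝ) = (θ-φ)/2 by ring, show 4*((θ-φ)/2) + 2*φ = 2*θ by ring,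
        Real.sin_sq_eq_half_sub θ]
      ring
    have e2 : fH = fun u => fK (-u) := by
      funext u
      simp only [hfK, hfH, Real.sin_neg, abs_neg]
      rw [show 4*(-u) - 2*φ = -(4*u + 2*φ) by ring, Real.cos_neg]
    rw [intervalIntegral.integral_congr (fun θ _ => e1 θ), intervalIntegral.integral_const_mul,
      intervalIntegral.integral_comp_mul_add fH (by norm_num : (2⁻¹:ℝ) ≠ 0) (-(φ/2))]
    rw [show (2⁻¹*0 + -(φ/2) : ℝ) = -(φ/2) by ring, show (2⁻¹*π + -(φ/2) : ℝ) = (π-φ)/2 by ring,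
      smul_eq_mul, e2, intervalIntegral.integral_comp_neg fK]
    rw [show -((π-φ)/2) = (φ-π)/2 by ring, neg_neg]
    ring
  -- Step E : join and use periodicity
  have iK1 : IntervalIntegrable fK volume ((φ-π)/2) (φ/2) :=
    (logsin_ii mem5 mem1).mul_continuousOn (Continuous.continuousOn (by fun_prop))
  have iK2 : IntervalIntegrable fK volume (φ/2) ((π+φ)/2) :=
    (logsin_ii mem1 mem2).mul_continuousOn (Continuous.continuousOn (by fun_prop))
  have hadj := intervalIntegral.integral_add_adjacent_intervals iK1 iK2
  have hper : Function.Periodic fK π := by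
    intro u
    simp only [hfK]
    rw [show 4*(u+π) - 2*φ = (4*u - 2*φ + 2*π) + 2*π by ring, Real.cos_add_two_pi,
      Real.cos_add_two_pi, Real.sin_add_pi, abs_neg]
  have hperiodic := hper.intervalIntegral_add_eq ((φ-π)/2) 0
  rw [show (φ-π)/2 + π = (π+φ)/2 by ring, zero_add] at hperiodic
  -- Step F : expand fK over [0,π]
  have hexp : ∫ u in (0:ℝ)..π, fK u
      = ∫ u in (0:ℝ)..π, (Real.log |Real.sin u|
          + ((-(Real.cos (2*φ))) * (Real.log |Real.sin u| * Real.cos (4*u))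
            + (-(Real.sin (2*φ))) * (Real.log |Real.sin u| * Real.sin (4*u)))) := by
    apply intervalIntegral.integral_congr
    intro u _
    simp only [hfK]
    rw [show 4*u - 2*φ = 4*u - 2*φ from rfl, Real.cos_sub (4*u) (2*φ)]
    ring
  have j1 : IntervalIntegrable (fun u : ℝ => Real.log |Real.sin u|) volume 0 π :=
    logsin_ii mem0 memp
  have j2 : IntervalIntegrable
      (fun u : ℝ => (-(Real.cos (2*φ))) * (Real.log |Real.sin u| * Real.cos (4*u))) volume 0 π :=
    (j1.mul_continuousOn (Continuous.continuousOn (by fun_prop))).const_mul _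
  have j3 : IntervalIntegrable
      (fun u : ℝ => (-(Real.sin (2*φ))) * (Real.log |Real.sin u| * Real.sin (4*u))) volume 0 π :=
    (j1.mul_continuousOn (Continuous.continuousOn (by fun_prop))).const_mul _
  have hK0 : ∫ u in (0:ℝ)..π, fK u = -(π * Real.log 2) + (π/4) * Real.cos (2*φ) := by
    rw [hexp, intervalIntegral.integral_add j1 (j2.add j3),
      intervalIntegral.integral_add j2 j3,
      intervalIntegral.integral_const_mul, intervalIntegral.integral_const_mul,
      integral_logsin_pi, integral_logsin_cos4, integral_logsin_sin4]
    ring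
  -- assemble
  have hc2 : Real.cos (2*φ) = 2*z^2 - 1 := by
    rw [Real.cos_two_mul, hcosφ]
  rw [hfirst, hAplus, hAminus]
  have : (∫ u in ((φ-π)/2)..(φ/2), fK u) + ∫ u in (φ/2)..((π+φ)/2), fK u
      = -(π * Real.log 2) + (π/4) * Real.cos (2*φ) := by
    rw [hadj, hperiodic, hK0]
  rw [hc2] at this
  linarith [this]

lemma int_sq_sqrt : ∫ x in (-1:ℝ)..1, x^2 * Real.sqrt (1 - x^2) = π/8 := by
  have hpi := Real.pi_pos
  have h := intervalIntegral.integral_comp_smul_deriv (a := -(π/2)) (b := π/2)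
    (g := fun y => y^2 * Real.sqrt (1 - y^2)) (f := Real.sin) (f' := Real.cos)
    (fun x _ => Real.hasDerivAt_sin x) Real.continuous_cos.continuousOn
    (by fun_prop)
  rw [Real.sin_neg, Real.sin_pi_div_two] at h
  rw [← h]
  have e : ∀ x ∈ uIcc (-(π/2)) (π/2),
      Real.cos x • ((fun y => y^2 * Real.sqrt (1 - y^2)) ∘ Real.sin) x
        = 1/8 - Real.cos (4*x)/8 := by
    intro x hx
    rw [uIcc_of_le (by linarith)] at hx
    have hc : 0 ≤ Real.cos x := Real.cos_nonneg_of_mem_Icc ⟨hx.1, hx.2⟩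
    have hsq : Real.sqrt (1 - Real.sin x^2) = Real.cos x := by
      rw [show (1:ℝ) - Real.sin x^2 = Real.cos x^2 by rw [Real.cos_sq'],
        Real.sqrt_sq_eq_abs, abs_of_nonneg hc]
    simp only [Function.comp_apply, smul_eq_mul]
    rw [hsq]
    have h2 : Real.sin (2*x)^2 = 1/2 - Real.cos (4*x)/2 := by
      rw [Real.sin_sq_eq_half_sub, show 2*(2*x) = 4*x by ring]
    rw [Real.sin_two_mul] at h2
    linear_combination h2 / 4
  rw [intervalIntegral.integral_congr e]
  have hcos4 : ∫ x in (-(π/2))..(π/2), Real.cos (4*x) = 0 := by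
    have h4 := intervalIntegral.integral_comp_mul_left (a := -(π/2)) (b := π/2)
      (f := Real.cos) (c := 4) (by norm_num)
    rw [show (4:ℝ) * -(π/2) = -(2*π) by ring, show (4:ℝ) * (π/2) = 2*π by ring] at h4
    rw [h4, integral_cos]
    simp [Real.sin_two_pi, Real.sin_neg]
  have hsplit : ∫ x in (-(π/2))..(π/2), (1/8 - Real.cos (4*x)/8)
      = (∫ x in (-(π/2))..(π/2), (1/8 : ℝ)) - ∫ x in (-(π/2))..(π/2), Real.cos (4*x)/8 := by
    apply intervalIntegral.integral_sub
    · exact intervalIntegrable_const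
    · exact Continuous.intervalIntegrable (by fun_prop) _ _
  rw [hsplit]
  have : ∫ x in (-(π/2))..(π/2), Real.cos (4*x)/8 = 0 := by
    rw [intervalIntegral.integral_div, hcos4]
    norm_num
  rw [this, intervalIntegral.integral_const, smul_eq_mul]
  ring

theorem double_int :
    (∫ z in (-1 : ℝ)..1, ∫ x in (-1 : ℝ)..1,
        Real.log |z - x| * Real.sqrt (1 - x ^ 2) * Real.sqrt (1 - z ^ 2))
      = Real.pi ^ 2 / 16 * (-1 - Real.log 16) := by
  have hstep : ∫ z in (-1 : ℝ)..1, ∫ x in (-1 : ℝ)..1,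
        Real.log |z - x| * Real.sqrt (1 - x ^ 2) * Real.sqrt (1 - z ^ 2)
      = ∫ z in (-1 : ℝ)..1,
          (π * z^2/2 - π/2 * (1/2 + Real.log 2)) * Real.sqrt (1 - z ^ 2) := by
    apply intervalIntegral.integral_congr_ae
    filter_upwards [ae_ne_vol 1] with z hne hz
    rw [uIoc_of_le (by norm_num : (-1:ℝ) ≤ 1)] at hz
    have hzmem : z ∈ Set.Ioo (-1:ℝ) 1 := ⟨hz.1, lt_of_le_of_ne hz.2 hne⟩
    rw [intervalIntegral.integral_mul_const, psi_val hzmem]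
  rw [hstep]
  have e : ∀ z ∈ uIcc (-1:ℝ) 1,
      (π * z^2/2 - π/2 * (1/2 + Real.log 2)) * Real.sqrt (1 - z ^ 2)
        = π/2 * (z^2 * Real.sqrt (1 - z^2)) - (π/2 * (1/2 + Real.log 2)) * Real.sqrt (1 - z^2) := by
    intro z _; ring
  rw [intervalIntegral.integral_congr e]
  have i1 : IntervalIntegrable (fun z : ℝ => π/2 * (z^2 * Real.sqrt (1 - z^2))) volume (-1) 1 :=
    Continuous.intervalIntegrable (by fun_prop) _ _
  have i2 : IntervalIntegrable
      (fun z : ℝ => (π/2 * (1/2 + Real.log 2)) * Real.sqrt (1 - z^2)) volume (-1) 1 :=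
    Continuous.intervalIntegrable (by fun_prop) _ _
  rw [intervalIntegral.integral_sub i1 i2, intervalIntegral.integral_const_mul,
    intervalIntegral.integral_const_mul, int_sq_sqrt, integral_sqrt_one_sub_sq]
  have hlog16 : Real.log 16 = 4 * Real.log 2 := by
    rw [show (16:ℝ) = 2^4 by norm_num, Real.log_pow]
    norm_num
  rw [hlog16]
  ring

/-- `ψ(z) = ∫_{-1}^1 ln|z-x| √(1-x²) dx = πz²/2 - (π/2)(1/2 + ln 2)` for `z ∈ (-1,1)`,
and the double integral `∬ ln|z-x| √(1-x²)√(1-z²) dx dz = (π²/16)(-1 - ln 16)`. -/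
theorem psi_formula_and_double_integral :
    (∀ z ∈ Set.Ioo (-1 : ℝ) 1,
      (∫ x in (-1 : ℝ)..1, Real.log |z - x| * Real.sqrt (1 - x ^ 2))
        = Real.pi * z ^ 2 / 2 - (Real.pi / 2) * (1 / 2 + Real.log 2)) ∧
    (∫ z in (-1 : ℝ)..1, ∫ x in (-1 : ℝ)..1,
        Real.log |z - x| * Real.sqrt (1 - x ^ 2) * Real.sqrt (1 - z ^ 2))
      = Real.pi ^ 2 / 16 * (-1 - Real.log 16) := by
  exact ⟨fun z hz => psi_val hz, double_int⟩
end

section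
/- ∫_0^∞ J₀(r) dr = 1, where J₀ is the Bessel function of the first kind of order 0 and the integral is an improper Riemann integral. -/
open Filter Topology intervalIntegral

open MeasureTheory Real Set FourierTransform

/-- The Bessel function of the first kind of order `0`,
`J₀(r) = (1/π) ∫_0^π cos(r sin θ) dθ`. -/
noncomputable def besselJ0 (r : ℝ) : ℝ :=
  (1 / Real.pi) * ∫ θ in (0 : ℝ)..Real.pi, Real.cos (r * Real.sin θ)

lemma rl_sin (g : ℝ → ℝ) (hg : Integrable g) :
    Tendsto (fun R : ℝ => ∫ u, Real.sin (R * u) * g u) atTop (𝓝 0) := by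
  have hG : Integrable (fun u => (g u : ℂ)) := hg.ofReal
  have h0 : Tendsto (𝓕 (fun u => (g u : ℂ))) (cocompact ℝ) (𝓝 0) :=
    Real.zero_at_infty_fourier _
  have hmap : Tendsto (fun R : ℝ => -R / (2 * Real.pi)) atTop (cocompact ℝ) := by
    rw [cocompact_eq_atBot_atTop]
    apply Tendsto.mono_right _ le_sup_left
    apply Tendsto.atBot_div_const (by positivity)
    exact tendsto_neg_atBot_iff.mpr tendsto_id
  have h1 : Tendsto (fun R : ℝ => 𝓕 (fun u => (g u : ℂ)) (-R / (2 * Real.pi))) atTop (𝓝 0) :=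
    h0.comp hmap
  have h2 : Tendsto (fun R : ℝ => (𝓕 (fun u => (g u : ℂ)) (-R / (2 * Real.pi))).im) atTop (𝓝 0) := by
    simpa [Function.comp_def] using (Complex.continuous_im.tendsto 0).comp h1
  refine h2.congr fun R => ?_
  rw [Real.fourier_real_eq_integral_exp_smul]
  have hint : Integrable (fun v : ℝ => Complex.exp (↑(-2 * Real.pi * v * (-R / (2 * Real.pi))) * Complex.I) • (g v : ℂ)) := by
    apply (hG.norm.const_mul 1).mono'
    · apply AEStronglyMeasurable.fun_smul _ hG.aestronglyMeasurable
      apply Continuous.aestronglyMeasurable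
      continuity
    · filter_upwards with v
      rw [norm_smul, Complex.norm_exp_ofReal_mul_I, one_mul]
  rw [show (∫ (v : ℝ), Complex.exp (↑(-2 * Real.pi * v * (-R / (2 * Real.pi))) * Complex.I) • (g v : ℂ)).im = RCLike.im (∫ (v : ℝ), Complex.exp (↑(-2 * Real.pi * v * (-R / (2 * Real.pi))) * Complex.I) • (g v : ℂ)) from rfl, ← integral_im hint]
  apply MeasureTheory.integral_congr_ae
  filter_upwards with v
  have hπ : (2 : ℝ) * Real.pi ≠ 0 := by positivity
  have h3 : -2 * Real.pi * v * (-R / (2 * Real.pi)) = R * v := by field_simp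
  rw [h3, smul_eq_mul]
  show (_ * _ : ℂ).im = _
  rw [Complex.mul_im, Complex.ofReal_im, Complex.ofReal_re, Complex.exp_ofReal_mul_I_im]
  ring

-- |sin (n x)| ≤ n |sin x|
lemma abs_sin_nat_mul_le (n : ℕ) (x : ℝ) : |Real.sin (n * x)| ≤ n * |Real.sin x| := by
  induction n with
  | zero => simp
  | succ k ih =>
    have : ((k : ℝ) + 1) * x = k * x + x := by ring
    push_cast
    rw [this, Real.sin_add]
    calc |Real.sin (k * x) * Real.cos x + Real.cos (k * x) * Real.sin x|
        ≤ |Real.sin (k * x) * Real.cos x| + |Real.cos (k * x) * Real.sin x| := abs_add_le _ _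
      _ ≤ |Real.sin (k * x)| + |Real.sin x| := by
          rw [abs_mul, abs_mul]
          have h1 := Real.abs_cos_le_one x
          have h2 := Real.abs_cos_le_one ((k:ℝ) * x)
          nlinarith [abs_nonneg (Real.sin ((k:ℝ)*x)), abs_nonneg (Real.sin x),
            abs_nonneg (Real.cos ((k:ℝ)*x)), abs_nonneg (Real.cos x)]
      _ ≤ (k + 1) * |Real.sin x| := by nlinarith [abs_nonneg (Real.sin x)]

-- boundedness: |sin (c x) / sin x| ≤ c for c = n
lemma quot_bound (n : ℕ) (x : ℝ) : |Real.sin (n * x) / Real.sin x| ≤ n := by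
  rcases eq_or_ne (Real.sin x) 0 with h | h
  · simp [h]
  · rw [abs_div, div_le_iff₀ (abs_pos.mpr h)]
    exact abs_sin_nat_mul_le n x

lemma intInt_quot (n : ℕ) (a b : ℝ) :
    IntervalIntegrable (fun u => Real.sin (n * u) / Real.sin u) volume a b := by
  apply IntervalIntegrable.mono_fun (_root_.intervalIntegrable_const (c := (n : ℝ)))
  · exact ((Real.measurable_sin.comp (measurable_id.const_mul _)).div
      Real.measurable_sin).aestronglyMeasurable
  · filter_upwards with u
    rw [Real.norm_eq_abs, Real.norm_eq_abs]
    exact (quot_bound n u).trans (le_abs_self _)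

-- Dirichlet kernel integral
lemma dirichlet_kernel (n : ℕ) :
    ∫ u in (0:ℝ)..(Real.pi/2), Real.sin ((2 * n + 1) * u) / Real.sin u = Real.pi / 2 := by
  induction n with
  | zero =>
    have : ∫ u in (0:ℝ)..(Real.pi/2), Real.sin ((2 * (0:ℕ) + 1) * u) / Real.sin u
        = ∫ u in (0:ℝ)..(Real.pi/2), 1 := by
      apply intervalIntegral.integral_congr_ae
      have h0 : (0:ℝ) ≤ Real.pi / 2 := by positivity
      filter_upwards with u hu
      rw [Set.uIoc_of_le h0] at hu
      have hs : Real.sin u ≠ 0 := by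
        refine ne_of_gt (Real.sin_pos_of_pos_of_lt_pi hu.1 ?_)
        linarith [hu.2, Real.pi_pos]
      norm_num [div_self hs]
    rw [this]
    simp
  | succ k ih =>
    have key : ∫ u in (0:ℝ)..(Real.pi/2),
        (Real.sin ((2 * (k+1) + 1) * u) / Real.sin u - Real.sin ((2 * k + 1) * u) / Real.sin u)
        = 0 := by
      have congr1 : ∀ᵐ u, u ∈ Set.uIoc (0:ℝ) (Real.pi/2) →
          Real.sin ((2 * (k+1) + 1) * u) / Real.sin u - Real.sin ((2 * k + 1) * u) / Real.sin u
          = 2 * Real.cos ((2 * k + 2) * u) := by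
        have h0 : (0:ℝ) ≤ Real.pi / 2 := by positivity
        filter_upwards with u hu
        rw [Set.uIoc_of_le h0] at hu
        have hs : Real.sin u ≠ 0 := by
          refine ne_of_gt (Real.sin_pos_of_pos_of_lt_pi hu.1 ?_)
          linarith [hu.2, Real.pi_pos]
        rw [div_sub_div_same, Real.sin_sub_sin]
        have e1 : ((2 * ((k:ℝ)+1) + 1) * u - (2 * k + 1) * u) / 2 = u := by ring
        have e2 : ((2 * ((k:ℝ)+1) + 1) * u + (2 * k + 1) * u) / 2 = (2 * k + 2) * u := by ring
        push_cast
        rw [e1, e2]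
        field_simp
      rw [intervalIntegral.integral_congr_ae congr1]
      have : ∫ u in (0:ℝ)..(Real.pi/2), 2 * Real.cos ((2 * (k:ℝ) + 2) * u)
          = 2 * ((2 * (k:ℝ) + 2)⁻¹ * (Real.sin ((k+1) * Real.pi) - Real.sin 0)) := by
        rw [intervalIntegral.integral_const_mul]
        congr 1
        have hc : (2 * (k:ℝ) + 2) ≠ 0 := by positivity
        rw [intervalIntegral.integral_comp_mul_left Real.cos hc, mul_zero]
        have : (2 * (k:ℝ) + 2) * (Real.pi / 2) = ((k:ℝ)+1) * Real.pi := by ring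
        rw [this, integral_cos, smul_eq_mul]
      rw [this]
      have : Real.sin (((k:ℕ)+1) * Real.pi) = 0 := by
        exact_mod_cast Real.sin_nat_mul_pi (k+1)
      push_cast at this ⊢
      simp [this]
    have split := intervalIntegral.integral_sub (intInt_quot (2*(k+1)+1) 0 (Real.pi/2))
      (intInt_quot (2*k+1) 0 (Real.pi/2))
    push_cast at split key ih ⊢
    linarith [key, ih, split]

noncomputable def S (R : ℝ) : ℝ := ∫ t in (0:ℝ)..R, Real.sin t / t

/-- the correction function `v` -/
noncomputable def vv (u : ℝ) : ℝ := 1 / u - 1 / Real.sin u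

lemma sinc_bound (t : ℝ) : |Real.sin t / t| ≤ 1 := by
  rcases eq_or_ne t 0 with h | h
  · simp [h]
  · rw [abs_div, div_le_one (abs_pos.mpr h)]
    exact Real.abs_sin_le_abs

lemma intInt_sinc (a b : ℝ) : IntervalIntegrable (fun t => Real.sin t / t) volume a b := by
  apply IntervalIntegrable.mono_fun (_root_.intervalIntegrable_const (c := (1 : ℝ)))
  · exact (Real.measurable_sin.div measurable_id).aestronglyMeasurable
  · filter_upwards with t
    rw [Real.norm_eq_abs, Real.norm_eq_abs]
    exact (sinc_bound t).trans (le_abs_self _)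

lemma vv_bound {u : ℝ} (hu : u ∈ Ioc 0 (Real.pi / 2)) : |vv u| ≤ 2 := by
  have hu0 : 0 < u := hu.1
  have hupi : u < Real.pi := lt_of_le_of_lt hu.2 (by linarith [Real.pi_pos])
  have hs : 0 < Real.sin u := Real.sin_pos_of_pos_of_lt_pi hu0 hupi
  have hsu : Real.sin u < u := Real.sin_lt hu0
  have hmono : 2 / Real.pi * u ≤ Real.sin u := Real.mul_le_sin hu0.le hu.2
  have hv : vv u ≤ 0 := by
    rw [vv, sub_nonpos]
    exact one_div_le_one_div_of_le hs hsu.le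
  rw [abs_of_nonpos hv, vv, neg_sub]
  have key : 1 / Real.sin u - 1 / u = (u - Real.sin u) / (Real.sin u * u) := by
    field_simp
  rw [key, div_le_iff₀ (by positivity)]
  have hpi3 : (3:ℝ) < Real.pi := Real.pi_gt_three
  have hpi4 : Real.pi < 4 := Real.pi_lt_d2.trans (by norm_num)
  have hmono' : u / 2 ≤ Real.sin u := by
    refine le_trans ?_ hmono
    have hinv : (1:ℝ)/4 ≤ 1/Real.pi := one_div_le_one_div_of_le (by positivity) hpi4.le
    have h := mul_le_mul_of_nonneg_right hinv hu0.le
    have e : 2 / Real.pi * u = 2 * (1/Real.pi * u) := by ring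
    linarith
  rcases le_or_gt u 1 with h1 | h1
  · have hcube := Real.sin_gt_sub_cube hu0
    nlinarith [mul_pos hu0 hu0, mul_pos (mul_pos hu0 hu0) hu0]
  · nlinarith [mul_pos hu0 hs, sq_nonneg (u - 1)]

lemma vv_integrable :
    Integrable (Set.indicator (Ioc (0:ℝ) (Real.pi/2)) vv) := by
  apply IntegrableOn.integrable_indicator _ measurableSet_Ioc
  apply Measure.integrableOn_of_bounded (M := 2) (measure_Ioc_lt_top).ne
  · exact ((measurable_const.div measurable_id).sub
      (measurable_const.div Real.measurable_sin)).aestronglyMeasurable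
  · rw [ae_restrict_iff' measurableSet_Ioc]
    filter_upwards with u hu
    rw [Real.norm_eq_abs]
    exact vv_bound hu

lemma S_odd (n : ℕ) :
    S ((2 * n + 1) * (Real.pi/2)) = Real.pi / 2 +
      ∫ u, Real.sin ((2 * n + 1) * u) * Set.indicator (Ioc (0:ℝ) (Real.pi/2)) vv u := by
  have h0 : (0:ℝ) ≤ Real.pi / 2 := by positivity
  set c : ℝ := 2 * n + 1 with hc_def
  have hc : c ≠ 0 := by positivity
  have hcn : ((2 * n + 1 : ℕ) : ℝ) = c := by push_cast [hc_def]; ring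
  -- step 1 : S (c * π/2) = ∫ u in 0..π/2, sin (c u) / u
  have step1 : S (c * (Real.pi/2)) = ∫ u in (0:ℝ)..(Real.pi/2), Real.sin (c * u) / u := by
    have e1 : (fun u => Real.sin (c * u) / u)
        = fun u => c * ((fun t => Real.sin t / t) (c * u)) := by
      funext u
      rcases eq_or_ne u 0 with h | h
      · simp [h]
      · field_simp
    rw [e1, intervalIntegral.integral_const_mul,
      intervalIntegral.integral_comp_mul_left (fun t => Real.sin t / t) hc, mul_zero]
    rw [smul_eq_mul, ← mul_assoc, mul_inv_cancel₀ hc, one_mul, S]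
  -- step 2 : pointwise decomposition
  have step2 : (fun u => Real.sin (c * u) / u)
      = fun u => Real.sin (c * u) / Real.sin u + Real.sin (c * u) * vv u := by
    funext u
    rw [vv]
    ring
  -- integrability of the second summand
  have hint2 : IntervalIntegrable (fun u => Real.sin (c * u) * vv u) volume 0 (Real.pi/2) := by
    apply IntervalIntegrable.mono_fun (_root_.intervalIntegrable_const (c := (2 : ℝ)))
    · apply Measurable.aestronglyMeasurable
      exact (Real.measurable_sin.comp (measurable_id.const_mul _)).mul
        ((measurable_const.div measurable_id).sub (measurable_const.div Real.measurable_sin))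
    · rw [Filter.EventuallyLE, ae_restrict_iff' measurableSet_uIoc]
      filter_upwards with u hu
      rw [Set.uIoc_of_le h0] at hu
      rw [Real.norm_eq_abs, Real.norm_eq_abs, abs_mul, abs_two]
      calc |Real.sin (c * u)| * |vv u| ≤ 1 * 2 :=
            mul_le_mul (Real.abs_sin_le_one _) (vv_bound hu) (abs_nonneg _) one_pos.le
        _ = 2 := one_mul 2
  have hint1 : IntervalIntegrable (fun u => Real.sin (c * u) / Real.sin u) volume 0 (Real.pi/2) := by
    have := intInt_quot (2 * n + 1) 0 (Real.pi/2)
    simpa [hcn] using this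
  -- step 3 : split the integral
  have step3 : (∫ u in (0:ℝ)..(Real.pi/2), Real.sin (c * u) / u)
      = (∫ u in (0:ℝ)..(Real.pi/2), Real.sin (c * u) / Real.sin u)
        + ∫ u in (0:ℝ)..(Real.pi/2), Real.sin (c * u) * vv u := by
    rw [step2]
    exact intervalIntegral.integral_add hint1 hint2
  -- step 4 : convert second to a whole-line integral of indicator
  have step4 : (∫ u in (0:ℝ)..(Real.pi/2), Real.sin (c * u) * vv u)
      = ∫ u, Real.sin (c * u) * Set.indicator (Ioc (0:ℝ) (Real.pi/2)) vv u := by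
    rw [intervalIntegral.integral_of_le h0, ← MeasureTheory.integral_indicator measurableSet_Ioc]
    congr 1
    funext u
    by_cases h : u ∈ Ioc (0:ℝ) (Real.pi/2)
    · simp [Set.indicator_of_mem h]
    · simp [Set.indicator_of_notMem h]
  have hD : (∫ u in (0:ℝ)..(Real.pi/2), Real.sin (c * u) / Real.sin u) = Real.pi / 2 := by
    have := dirichlet_kernel n
    rw [show ((2:ℝ) * n + 1) = c from by push_cast [hc_def]; ring] at this
    exact this
  rw [step1, step3, step4, hD]

lemma integral_inv_sq' {a b : ℝ} (ha : 1 ≤ a) (hab : a ≤ b) :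
    ∫ t in a..b, (t^2)⁻¹ = a⁻¹ - b⁻¹ := by
  have : ∀ t ∈ Set.uIcc a b, HasDerivAt (fun x : ℝ => -x⁻¹) ((t^2)⁻¹) t := by
    intro t ht
    rw [Set.uIcc_of_le hab] at ht
    have ht0 : t ≠ 0 := by intro h; rw [h] at ht; linarith [ht.1]
    simpa using (hasDerivAt_inv ht0).fun_neg
  have hint : IntervalIntegrable (fun t : ℝ => (t^2)⁻¹) volume a b := by
    apply ContinuousOn.intervalIntegrable
    apply ContinuousOn.inv₀ (continuousOn_pow 2)
    intro t ht
    rw [Set.uIcc_of_le hab] at ht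
    have : (0:ℝ) < t := by linarith [ht.1]
    positivity
  rw [intervalIntegral.integral_eq_sub_of_hasDerivAt this hint]
  ring

lemma S_diff {a b : ℝ} (ha : 1 ≤ a) (hab : a ≤ b) : |S b - S a| ≤ 3 / a := by
  have ha0 : (0:ℝ) < a := by linarith
  have hSba : S b - S a = ∫ t in a..b, Real.sin t / t := by
    rw [S, S, ← intervalIntegral.integral_add_adjacent_intervals (intInt_sinc 0 a) (intInt_sinc a b)]
    ring
  have hrw : (∫ t in a..b, Real.sin t / t) = ∫ t in a..b, t⁻¹ * Real.sin t := by
    congr 1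
    funext t
    rw [div_eq_inv_mul]
  have hu : ∀ x ∈ Set.uIcc a b, HasDerivAt (fun t : ℝ => t⁻¹) (-(x^2)⁻¹) x := by
    intro x hx
    rw [Set.uIcc_of_le hab] at hx
    have : x ≠ 0 := by intro h; rw [h] at hx; linarith [hx.1]
    exact hasDerivAt_inv this
  have hv : ∀ x ∈ Set.uIcc a b, HasDerivAt (fun t : ℝ => -Real.cos t) (Real.sin x) x := by
    intro x _
    simpa using (Real.hasDerivAt_cos x).fun_neg
  have hu' : IntervalIntegrable (fun t : ℝ => -(t^2)⁻¹) volume a b := by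
    apply ContinuousOn.intervalIntegrable
    apply ContinuousOn.neg
    apply ContinuousOn.inv₀ (continuousOn_pow 2)
    intro t ht
    rw [Set.uIcc_of_le hab] at ht
    have : (0:ℝ) < t := by linarith [ht.1]
    positivity
  have hv' : IntervalIntegrable Real.sin volume a b :=
    Real.continuous_sin.intervalIntegrable a b
  have hparts := intervalIntegral.integral_mul_deriv_eq_deriv_mul hu hv hu' hv'
  -- hparts : ∫ t in a..b, t⁻¹ * sin t = b⁻¹ * (-cos b) - a⁻¹ * (-cos a) - ∫ -(t^2)⁻¹ * (-cos t)
  have hlast : (∫ t in a..b, -(t^2)⁻¹ * -Real.cos t) = ∫ t in a..b, (t^2)⁻¹ * Real.cos t := by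
    congr 1; funext t; ring
  have hbound : |∫ t in a..b, (t^2)⁻¹ * Real.cos t| ≤ a⁻¹ - b⁻¹ := by
    have h1 : |∫ t in a..b, (t^2)⁻¹ * Real.cos t| ≤ ∫ t in a..b, |(t^2)⁻¹ * Real.cos t| :=
      intervalIntegral.abs_integral_le_integral_abs hab
    have hint2 : IntervalIntegrable (fun t : ℝ => (t^2)⁻¹) volume a b := by
      apply ContinuousOn.intervalIntegrable
      apply ContinuousOn.inv₀ (continuousOn_pow 2)
      intro t ht
      rw [Set.uIcc_of_le hab] at ht
      have : (0:ℝ) < t := by linarith [ht.1]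
      positivity
    have habs : IntervalIntegrable (fun t : ℝ => |(t^2)⁻¹ * Real.cos t|) volume a b := by
      apply IntervalIntegrable.abs
      exact hint2.mul_continuousOn Real.continuous_cos.continuousOn
    have h2 : (∫ t in a..b, |(t^2)⁻¹ * Real.cos t|) ≤ ∫ t in a..b, (t^2)⁻¹ := by
      apply intervalIntegral.integral_mono_on hab habs hint2
      intro t ht
      rw [abs_mul]
      have h3 : |(t^2)⁻¹| = (t^2)⁻¹ := abs_of_nonneg (by positivity)
      rw [h3]
      calc (t^2)⁻¹ * |Real.cos t| ≤ (t^2)⁻¹ * 1 :=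
            mul_le_mul_of_nonneg_left (Real.abs_cos_le_one t) (by positivity)
        _ = (t^2)⁻¹ := mul_one _
    rw [integral_inv_sq' ha hab] at h2
    linarith
  have hb0 : (0:ℝ) < b := by linarith
  have hcb : |b⁻¹ * (-Real.cos b)| ≤ a⁻¹ := by
    rw [abs_mul, abs_neg, abs_of_nonneg (by positivity : (0:ℝ) ≤ b⁻¹)]
    calc b⁻¹ * |Real.cos b| ≤ b⁻¹ * 1 :=
          mul_le_mul_of_nonneg_left (Real.abs_cos_le_one b) (by positivity)
      _ = b⁻¹ := mul_one _
      _ ≤ a⁻¹ := by gcongr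
  have hca : |a⁻¹ * (-Real.cos a)| ≤ a⁻¹ := by
    rw [abs_mul, abs_neg, abs_of_nonneg (by positivity : (0:ℝ) ≤ a⁻¹)]
    calc a⁻¹ * |Real.cos a| ≤ a⁻¹ * 1 :=
          mul_le_mul_of_nonneg_left (Real.abs_cos_le_one a) (by positivity)
      _ = a⁻¹ := mul_one _
  have hib : b⁻¹ ≤ a⁻¹ := by gcongr
  have hbinv : (0:ℝ) < b⁻¹ := by positivity
  rw [hSba, hrw, hparts, hlast]
  have h3a : 3 / a = a⁻¹ + a⁻¹ + a⁻¹ := by field_simp; ring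
  rw [h3a]
  calc |b⁻¹ * -Real.cos b - a⁻¹ * -Real.cos a - ∫ t in a..b, (t^2)⁻¹ * Real.cos t|
      ≤ |b⁻¹ * -Real.cos b| + |a⁻¹ * -Real.cos a| + |∫ t in a..b, (t^2)⁻¹ * Real.cos t| := by
        calc _ ≤ |b⁻¹ * -Real.cos b - a⁻¹ * -Real.cos a| + |∫ t in a..b, (t^2)⁻¹ * Real.cos t| :=
              abs_sub _ _
          _ ≤ _ := by gcongr; exact abs_sub _ _
    _ ≤ a⁻¹ + a⁻¹ + (a⁻¹ - b⁻¹) := by gcongr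
    _ ≤ a⁻¹ + a⁻¹ + a⁻¹ := by linarith

lemma S_tendsto : Tendsto S atTop (𝓝 (Real.pi / 2)) := by
  have hcauchy : CauchySeq S := by
    rw [Metric.cauchySeq_iff']
    intro ε hε
    refine ⟨max 1 (4 / ε), fun R hR => ?_⟩
    have h1 : (1:ℝ) ≤ max 1 (4 / ε) := le_max_left _ _
    have h2 : 4 / ε ≤ max 1 (4 / ε) := le_max_right _ _
    have hd := S_diff h1 hR
    rw [Real.dist_eq]
    have hN : (0:ℝ) < max 1 (4 / ε) := by linarith
    have : 3 / max 1 (4 / ε) < ε := by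
      rw [div_lt_iff₀ hN]
      have : 4 / ε * ε ≤ max 1 (4 / ε) * ε := by
        apply mul_le_mul_of_nonneg_right h2 hε.le
      rw [div_mul_cancel₀ _ (ne_of_gt hε)] at this
      linarith
    linarith [hd]
  obtain ⟨L, hL⟩ := cauchySeq_tendsto_of_complete hcauchy
  have hr : Tendsto (fun n : ℕ => ((2 * n + 1 : ℝ)) * (Real.pi / 2)) atTop atTop := by
    apply tendsto_atTop_mono (fun n : ℕ => ?_) tendsto_natCast_atTop_atTop
    have hpi : (3:ℝ) < Real.pi := Real.pi_gt_three
    have : (0:ℝ) ≤ n := Nat.cast_nonneg n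
    nlinarith
  have hSr : Tendsto (fun n : ℕ => S ((2 * n + 1 : ℝ) * (Real.pi / 2))) atTop (𝓝 L) :=
    hL.comp hr
  have hSr2 : Tendsto (fun n : ℕ => S ((2 * n + 1 : ℝ) * (Real.pi / 2))) atTop
      (𝓝 (Real.pi / 2)) := by
    have heq : ∀ n : ℕ, S ((2 * n + 1 : ℝ) * (Real.pi / 2)) = Real.pi / 2 +
        ∫ u, Real.sin ((2 * n + 1) * u) * Set.indicator (Ioc (0:ℝ) (Real.pi/2)) vv u :=
      fun n => S_odd n
    have hE : Tendsto (fun n : ℕ =>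
        ∫ u, Real.sin ((2 * n + 1 : ℝ) * u) * Set.indicator (Ioc (0:ℝ) (Real.pi/2)) vv u)
        atTop (𝓝 0) := by
      have h2n : Tendsto (fun n : ℕ => (2 * n + 1 : ℝ)) atTop atTop := by
        apply tendsto_atTop_mono (fun n : ℕ => ?_) tendsto_natCast_atTop_atTop
        have : (0:ℝ) ≤ n := Nat.cast_nonneg n
        linarith
      exact (rl_sin _ vv_integrable).comp h2n
    have := hE.const_add (Real.pi / 2)
    rw [add_zero] at this
    exact this.congr fun n => (heq n).symm
  have : L = Real.pi / 2 := tendsto_nhds_unique hSr hSr2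
  rw [this] at hL
  exact hL

/-- correction weight on (0,1) -/
noncomputable def ww (u : ℝ) : ℝ := 1 / (u * Real.sqrt (1 - u^2)) - 1 / u

lemma sin_mul_div_bound (R s : ℝ) : |Real.sin (R * s) / s| ≤ |R| := by
  rcases eq_or_ne s 0 with h | h
  · simp [h]
  · rw [abs_div, div_le_iff₀ (abs_pos.mpr h)]
    calc |Real.sin (R * s)| ≤ |R * s| := Real.abs_sin_le_abs
      _ = |R| * |s| := abs_mul _ _

-- the oscillating kernel
noncomputable def kk (R : ℝ) (θ : ℝ) : ℝ := Real.sin (R * Real.sin θ) / Real.sin θ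

lemma kk_meas (R : ℝ) : Measurable (kk R) :=
  (Real.measurable_sin.comp (Real.measurable_sin.const_mul R)).div Real.measurable_sin

lemma kk_intInt (R a b : ℝ) : IntervalIntegrable (kk R) volume a b := by
  apply IntervalIntegrable.mono_fun (_root_.intervalIntegrable_const (c := |R|))
  · exact (kk_meas R).aestronglyMeasurable
  · filter_upwards with θ
    rw [Real.norm_eq_abs, Real.norm_eq_abs, abs_abs]
    exact sin_mul_div_bound R (Real.sin θ)

-- Fubini step
lemma fubini_step (R : ℝ) (hR : 0 < R) :
    ∫ r in (0:ℝ)..R, besselJ0 r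
      = (1/Real.pi) * ∫ θ in (0:ℝ)..Real.pi, ∫ r in (0:ℝ)..R, Real.cos (r * Real.sin θ) := by
  have hπ : (0:ℝ) ≤ Real.pi := Real.pi_pos.le
  simp_rw [besselJ0]
  rw [intervalIntegral.integral_const_mul]
  congr 1
  -- swap the two integrals
  rw [intervalIntegral.integral_of_le hR.le, intervalIntegral.integral_of_le hπ]
  simp_rw [intervalIntegral.integral_of_le hπ, intervalIntegral.integral_of_le hR.le]
  haveI h1 : IsFiniteMeasure (volume.restrict (Ioc (0:ℝ) R)) :=
    ⟨by rw [Measure.restrict_apply_univ]; exact measure_Ioc_lt_top⟩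
  haveI h2 : IsFiniteMeasure (volume.restrict (Ioc (0:ℝ) Real.pi)) :=
    ⟨by rw [Measure.restrict_apply_univ]; exact measure_Ioc_lt_top⟩
  apply MeasureTheory.integral_integral_swap
  apply Integrable.mono' (g := fun _ => (1:ℝ)) (integrable_const 1)
  · apply Continuous.aestronglyMeasurable
    exact Real.continuous_cos.comp (continuous_fst.mul (Real.continuous_sin.comp continuous_snd))
  · filter_upwards with p
    rw [Real.norm_eq_abs]
    exact Real.abs_cos_le_one _
-- inner integral evaluation
lemma inner_step (R : ℝ) (hR : 0 < R) :
    (∫ θ in (0:ℝ)..Real.pi, ∫ r in (0:ℝ)..R, Real.cos (r * Real.sin θ))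
      = ∫ θ in (0:ℝ)..Real.pi, kk R θ := by
  have hπ : (0:ℝ) ≤ Real.pi := Real.pi_pos.le
  apply intervalIntegral.integral_congr_ae
  have h0 : (volume : Measure ℝ) {Real.pi} = 0 := measure_singleton _
  have hae : ∀ᵐ θ : ℝ, θ ∉ ({Real.pi} : Set ℝ) := compl_mem_ae_iff.mpr h0
  filter_upwards [hae] with θ hθ hmem
  rw [Set.uIoc_of_le hπ] at hmem
  have hθπ : θ < Real.pi := lt_of_le_of_ne hmem.2 (by simpa using hθ)
  have hs : 0 < Real.sin θ := Real.sin_pos_of_pos_of_lt_pi hmem.1 hθπ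
  rw [intervalIntegral.integral_comp_mul_right Real.cos (ne_of_gt hs), zero_mul,
    integral_cos, Real.sin_zero, sub_zero, kk, smul_eq_mul]
  rw [inv_mul_eq_div, mul_comm R (Real.sin θ)]

-- symmetry step
lemma symm_step (R : ℝ) :
    (∫ θ in (0:ℝ)..Real.pi, kk R θ) = 2 * ∫ θ in (0:ℝ)..(Real.pi/2), kk R θ := by
  have h1 : (∫ θ in (0:ℝ)..Real.pi, kk R θ)
      = (∫ θ in (0:ℝ)..(Real.pi/2), kk R θ) + ∫ θ in (Real.pi/2)..Real.pi, kk R θ :=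
    (intervalIntegral.integral_add_adjacent_intervals (kk_intInt R 0 (Real.pi/2))
      (kk_intInt R (Real.pi/2) Real.pi)).symm
  have h2 : (∫ θ in (Real.pi/2)..Real.pi, kk R θ) = ∫ θ in (0:ℝ)..(Real.pi/2), kk R θ := by
    have := intervalIntegral.integral_comp_sub_left (a := (0:ℝ)) (b := Real.pi/2) (kk R) Real.pi
    rw [show Real.pi - Real.pi/2 = Real.pi/2 from by ring, sub_zero] at this
    rw [← this]
    apply intervalIntegral.integral_congr
    intro θ _
    simp only [kk, Real.sin_pi_sub]
  rw [h1, h2]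
  ring

lemma sin_image : Real.sin '' (Ioo 0 (Real.pi/2)) = Ioo (0:ℝ) 1 := by
  ext u
  constructor
  · rintro ⟨θ, hθ, rfl⟩
    have hπ := Real.pi_pos
    refine ⟨Real.sin_pos_of_pos_of_lt_pi hθ.1 (by linarith [hθ.2]), ?_⟩
    have h1 : Real.sin θ < Real.sin (Real.pi/2) := by
      apply Real.strictMonoOn_sin ⟨by linarith [hθ.1], by linarith [hθ.2]⟩
        ⟨by linarith, le_refl _⟩ hθ.2
    rwa [Real.sin_pi_div_two] at h1
  · intro hu
    refine ⟨Real.arcsin u, ⟨Real.arcsin_pos.mpr hu.1, Real.arcsin_lt_pi_div_two.mpr hu.2⟩, ?_⟩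
    exact Real.sin_arcsin (by linarith [hu.1]) hu.2.le

lemma cov_step (R : ℝ) :
    (∫ θ in (0:ℝ)..(Real.pi/2), kk R θ)
      = ∫ u in Ioo (0:ℝ) 1, Real.sin (R * u) / (u * Real.sqrt (1 - u^2)) := by
  have hπ : (0:ℝ) ≤ Real.pi / 2 := by positivity
  rw [intervalIntegral.integral_of_le hπ, MeasureTheory.integral_Ioc_eq_integral_Ioo]
  rw [← sin_image]
  rw [MeasureTheory.integral_image_eq_integral_abs_deriv_smul measurableSet_Ioo
    (fun x _ => (Real.hasDerivAt_sin x).hasDerivWithinAt)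
    (Real.injOn_sin.mono (fun x hx => by
      obtain ⟨h1, h2⟩ := Set.mem_Ioo.mp hx
      exact Set.mem_Icc.mpr ⟨by linarith [Real.pi_pos], h2.le⟩))]
  apply MeasureTheory.setIntegral_congr_fun measurableSet_Ioo
  intro θ hθ
  have hπ2 := Real.pi_pos
  have hs : 0 < Real.sin θ := Real.sin_pos_of_pos_of_lt_pi hθ.1 (by linarith [hθ.2])
  have hc : 0 < Real.cos θ := Real.cos_pos_of_mem_Ioo ⟨by linarith [hθ.1], hθ.2⟩
  have hsqrt : Real.sqrt (1 - Real.sin θ^2) = Real.cos θ := by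
    rw [← Real.cos_sq']
    exact Real.sqrt_sq hc.le
  dsimp only
  rw [smul_eq_mul, abs_of_pos hc, hsqrt, kk]
  field_simp

lemma ww_nonneg {u : ℝ} (hu : u ∈ Ioo (0:ℝ) 1) : 0 ≤ ww u := by
  have h1 : 0 < 1 - u^2 := by nlinarith [hu.1, hu.2]
  have hsq : 0 < Real.sqrt (1 - u^2) := Real.sqrt_pos.mpr h1
  have hle : Real.sqrt (1 - u^2) ≤ 1 := by
    have h := Real.sqrt_le_sqrt (show 1 - u^2 ≤ 1 by nlinarith [hu.1])
    rwa [Real.sqrt_one] at h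
  rw [ww, sub_nonneg]
  apply one_div_le_one_div_of_le (mul_pos hu.1 hsq)
  nlinarith [hu.1, hle, hsq]

lemma ww_bound {u : ℝ} (hu : u ∈ Ioo (0:ℝ) 1) : ww u ≤ (1 - u) ^ (-(1/2) : ℝ) := by
  have h1 : 0 < 1 - u^2 := by nlinarith [hu.1, hu.2]
  set s := Real.sqrt (1 - u^2) with hs_def
  have hs : 0 < s := Real.sqrt_pos.mpr h1
  have hs2 : s^2 = 1 - u^2 := Real.sq_sqrt h1.le
  have hle : s ≤ 1 := by
    have h := Real.sqrt_le_sqrt (show 1 - u^2 ≤ 1 by nlinarith [hu.1])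
    rwa [Real.sqrt_one] at h
  have hkey : 1 - s ≤ u^2 := by nlinarith
  have hu0 : u ≠ 0 := ne_of_gt hu.1
  have hs0 : s ≠ 0 := ne_of_gt hs
  have step1 : ww u = (1 - s) / (u * s) := by
    rw [ww, ← hs_def]
    field_simp
  have step2 : ww u ≤ 1 / s := by
    rw [step1, div_le_div_iff₀ (mul_pos hu.1 hs) hs]
    calc (1 - s) * s ≤ u^2 * s := by nlinarith
      _ ≤ u * s := by nlinarith [mul_pos hu.1 hs, hu.2, hs]
      _ = 1 * (u * s) := by ring
  have step3 : Real.sqrt (1 - u) ≤ s := by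
    apply Real.sqrt_le_sqrt
    nlinarith [hu.1]
  have hsu : 0 < Real.sqrt (1 - u) := Real.sqrt_pos.mpr (by linarith [hu.2])
  have step4 : (1:ℝ) / s ≤ 1 / Real.sqrt (1 - u) := one_div_le_one_div_of_le hsu step3
  have step5 : (1:ℝ) / Real.sqrt (1 - u) = (1 - u) ^ (-(1/2) : ℝ) := by
    rw [Real.rpow_neg (by linarith [hu.2] : (0:ℝ) ≤ 1 - u), ← Real.sqrt_eq_rpow, one_div]
  linarith

lemma ww_meas : Measurable ww := by
  have m1 : Measurable fun u : ℝ => Real.sqrt (1 - u^2) :=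
    Real.continuous_sqrt.measurable.comp (measurable_const.sub (measurable_id.pow_const 2))
  exact (measurable_const.div (measurable_id.mul m1)).sub (measurable_const.div measurable_id)

lemma ww_integrable : Integrable (Set.indicator (Ioo (0:ℝ) 1) ww) := by
  apply IntegrableOn.integrable_indicator _ measurableSet_Ioo
  have base : IntervalIntegrable (fun x : ℝ => x ^ (-(1/2):ℝ)) volume 0 1 :=
    intervalIntegrable_rpow' (by norm_num)
  have refl := (base.comp_sub_left 1).symm
  rw [show (1:ℝ) - 1 = 0 by ring, sub_zero] at refl
  have hIoc : IntegrableOn (fun x : ℝ => (1 - x) ^ (-(1/2):ℝ)) (Ioc (0:ℝ) 1) := by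
    rw [← intervalIntegrable_iff_integrableOn_Ioc_of_le (by norm_num : (0:ℝ) ≤ 1)]
    exact refl
  have hdom : IntegrableOn (fun x : ℝ => (1 - x) ^ (-(1/2):ℝ)) (Ioo (0:ℝ) 1) :=
    hIoc.mono_set Ioo_subset_Ioc_self
  apply Integrable.mono' hdom (ww_meas.aestronglyMeasurable.restrict)
  rw [ae_restrict_iff' measurableSet_Ioo]
  filter_upwards with u hu
  rw [Real.norm_eq_abs, abs_of_nonneg (ww_nonneg hu)]
  exact ww_bound hu

lemma ww_integrableOn : IntegrableOn ww (Ioo (0:ℝ) 1) := by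
  have := ww_integrable
  rwa [integrable_indicator_iff measurableSet_Ioo] at this

lemma split_step (R : ℝ) (hR : 0 < R) :
    (∫ u in Ioo (0:ℝ) 1, Real.sin (R * u) / (u * Real.sqrt (1 - u^2)))
      = S R + ∫ u, Real.sin (R * u) * Set.indicator (Ioo (0:ℝ) 1) ww u := by
  have hpt : (fun u => Real.sin (R * u) / (u * Real.sqrt (1 - u^2)))
      = fun u => Real.sin (R * u) / u + Real.sin (R * u) * ww u := by
    funext u
    rw [ww]
    ring
  have hmeas1 : Measurable fun u : ℝ => Real.sin (R * u) / u :=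
    (Real.measurable_sin.comp (measurable_id.const_mul R)).div measurable_id
  have h2 : IntegrableOn (fun u : ℝ => Real.sin (R * u) / u) (Ioo (0:ℝ) 1) := by
    apply Measure.integrableOn_of_bounded (M := |R|) measure_Ioo_lt_top.ne
      hmeas1.aestronglyMeasurable
    filter_upwards with u
    rw [Real.norm_eq_abs]
    exact sin_mul_div_bound R u
  have h3 : IntegrableOn (fun u : ℝ => Real.sin (R * u) * ww u) (Ioo (0:ℝ) 1) := by
    apply Integrable.mono' ww_integrableOn.norm
    · exact ((Real.measurable_sin.comp (measurable_id.const_mul R)).mul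
        ww_meas).aestronglyMeasurable.restrict
    · filter_upwards with u
      rw [Real.norm_eq_abs, abs_mul, Real.norm_eq_abs]
      calc |Real.sin (R * u)| * |ww u| ≤ 1 * |ww u| :=
            mul_le_mul_of_nonneg_right (Real.abs_sin_le_one _) (abs_nonneg _)
        _ = |ww u| := one_mul _
  rw [hpt, MeasureTheory.integral_add h2 h3]
  congr 1
  · -- first piece is S R
    rw [← MeasureTheory.integral_Ioc_eq_integral_Ioo,
      ← intervalIntegral.integral_of_le (by norm_num : (0:ℝ) ≤ 1)]
    have e1 : (fun u => Real.sin (R * u) / u)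
        = fun u => R * ((fun t => Real.sin t / t) (R * u)) := by
      funext u
      rcases eq_or_ne u 0 with h | h
      · simp [h]
      · field_simp
    rw [e1, intervalIntegral.integral_const_mul,
      intervalIntegral.integral_comp_mul_left (fun t => Real.sin t / t) hR.ne',
      mul_zero, mul_one, smul_eq_mul, ← mul_assoc, mul_inv_cancel₀ hR.ne', one_mul, S]
  · -- second piece as whole-line integral
    rw [← MeasureTheory.integral_indicator measurableSet_Ioo]
    congr 1
    funext u
    by_cases h : u ∈ Ioo (0:ℝ) 1
    · simp [Set.indicator_of_mem h]
    · simp [Set.indicator_of_notMem h]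

/-- `∫_0^∞ J₀(r) dr = 1` as an improper Riemann integral. -/
theorem integral_besselJ0 :
    Tendsto (fun R : ℝ => ∫ r in (0 : ℝ)..R, besselJ0 r) atTop (𝓝 1) := by
  set E : ℝ → ℝ := fun R => ∫ u, Real.sin (R * u) * Set.indicator (Ioo (0:ℝ) 1) ww u with hE_def
  have key : ∀ R : ℝ, 0 < R →
      (∫ r in (0 : ℝ)..R, besselJ0 r) = (1/Real.pi) * (2 * (S R + E R)) := by
    intro R hR
    rw [fubini_step R hR, inner_step R hR, symm_step R, cov_step R, split_step R hR]
  have hE : Tendsto E atTop (𝓝 0) := rl_sin _ ww_integrable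
  have hS := S_tendsto
  have hlim : Tendsto (fun R => (1/Real.pi) * (2 * (S R + E R))) atTop
      (𝓝 ((1/Real.pi) * (2 * (Real.pi/2 + 0)))) := by
    exact (((hS.add hE).const_mul 2).const_mul (1/Real.pi))
  have hval : (1/Real.pi) * (2 * (Real.pi/2 + 0)) = 1 := by
    have := Real.pi_ne_zero
    field_simp
    ring
  rw [hval] at hlim
  apply hlim.congr'
  filter_upwards [eventually_gt_atTop 0] with R hR
  exact (key R hR).symm
end

section
/- Let α > 0, let β ∈ (π/α, √3·π/α), and let ω ∈ ℂ \ [π²/α², ∞) with |ω − π²/α²| sufficiently small. Then among the poles ±i√(k²π²/α² − ω), k ∈ ℕ, of the meromorphic function m_ω, exactly two (namely ±i√(π²/α² − ω)) lie inside the horizontal strip {z ∈ ℂ : |Im z| ≤ β}. -/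
open Complex

/-- The pole `i√(k²π²/α² - ω)` of the meromorphic function `m_ω`. -/
noncomputable def mPole (α : ℝ) (ω : ℂ) (k : ℕ) : ℂ :=
  Complex.I * csqrt ((((k : ℝ) ^ 2 * Real.pi ^ 2 / α ^ 2 : ℝ) : ℂ) - ω)

lemma csqrt_re (z : ℂ) : (csqrt z).re = Real.sqrt ((‖z‖ + z.re) / 2) := by
  rw [csqrt, one_div, Complex.cpow_inv_two_re]

lemma csqrt_re_nonneg (z : ℂ) : 0 ≤ (csqrt z).re := by
  rw [csqrt_re]; exact Real.sqrt_nonneg _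

lemma csqrt_re_le (z : ℂ) : (csqrt z).re ≤ Real.sqrt ‖z‖ := by
  rw [csqrt_re]
  apply Real.sqrt_le_sqrt
  have := Complex.re_le_norm z
  linarith

lemma csqrt_re_ge (z : ℂ) : Real.sqrt z.re ≤ (csqrt z).re := by
  rw [csqrt_re]
  apply Real.sqrt_le_sqrt
  have := Complex.re_le_norm z
  linarith

lemma csqrt_ne_zero {z : ℂ} (hz : z ≠ 0) : csqrt z ≠ 0 := by
  simp [csqrt, Complex.cpow_eq_zero_iff, hz]

lemma mPole_im (α : ℝ) (ω : ℂ) (k : ℕ) :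
    (mPole α ω k).im = (csqrt ((((k : ℝ) ^ 2 * Real.pi ^ 2 / α ^ 2 : ℝ) : ℂ) - ω)).re := by
  simp [mPole]


/-- For `β ∈ (π/α, √3 π/α)` and `ω ∉ [π²/α², ∞)` with `|ω - π²/α²|` sufficiently small,
exactly the two poles `±i√(π²/α² - ω)` among `±i√(k²π²/α² - ω)`, `k ≥ 1`, lie in the
horizontal strip `{|Im z| ≤ β}`. -/
theorem exactly_two_poles_in_strip (α β : ℝ) (hα : 0 < α)
    (hβ : β ∈ Set.Ioo (Real.pi / α) (Real.sqrt 3 * Real.pi / α)) :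
    ∃ ε > 0, ∀ ω : ℂ, ω ∉ {z : ℂ | z.im = 0 ∧ (Real.pi ^ 2 / α ^ 2 : ℝ) ≤ z.re} →
      ‖ω - ((Real.pi ^ 2 / α ^ 2 : ℝ) : ℂ)‖ < ε →
      ({z : ℂ | ∃ k : ℕ, 1 ≤ k ∧ (z = mPole α ω k ∨ z = -mPole α ω k)} ∩
          {z : ℂ | |z.im| ≤ β}
        = {mPole α ω 1, -mPole α ω 1}) ∧
      mPole α ω 1 ≠ -mPole α ω 1 := by
  obtain ⟨hβ1, hβ2⟩ := hβ
  set c : ℝ := Real.pi ^ 2 / α ^ 2 with hc_def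
  have hπ : 0 < Real.pi := Real.pi_pos
  have hc : 0 < c := by positivity
  have hβpos : 0 < β := lt_trans (by positivity) hβ1
  have hβsq : β ^ 2 < 3 * c := by
    have h3 : (Real.sqrt 3 * Real.pi / α) ^ 2 = 3 * c := by
      rw [div_pow, mul_pow, Real.sq_sqrt (by norm_num : (3:ℝ) ≥ 0)]
      rw [hc_def]; ring
    calc β ^ 2 < (Real.sqrt 3 * Real.pi / α) ^ 2 := by
          apply pow_lt_pow_left₀ hβ2 hβpos.le; norm_num
      _ = 3 * c := h3
  refine ⟨min (β ^ 2) ((3 * c - β ^ 2) / 2), lt_min (by positivity) (by linarith), ?_⟩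
  intro ω hω hωε
  set ε : ℝ := min (β ^ 2) ((3 * c - β ^ 2) / 2) with hε_def
  have hεβ : ε ≤ β ^ 2 := min_le_left _ _
  have hε3 : ε ≤ (3 * c - β ^ 2) / 2 := min_le_right _ _
  -- ω ≠ c
  have hωc : ((c : ℝ) : ℂ) - ω ≠ 0 := by
    intro h
    apply hω
    have : ω = ((c : ℝ) : ℂ) := by linear_combination -h
    rw [this]
    exact ⟨by simp, by simp⟩
  -- mPole 1 argument simplification
  have harg1 : (((((1:ℕ) : ℝ) ^ 2 * Real.pi ^ 2 / α ^ 2 : ℝ)) : ℂ) - ω = ((c : ℝ) : ℂ) - ω := by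
    simp only [hc_def]; push_cast; ring
  have hm1 : mPole α ω 1 = Complex.I * csqrt (((c : ℝ) : ℂ) - ω) := by
    rw [mPole, harg1]
  have hm1ne : mPole α ω 1 ≠ -mPole α ω 1 := by
    have h0 : mPole α ω 1 ≠ 0 := by
      rw [hm1]; exact mul_ne_zero Complex.I_ne_zero (csqrt_ne_zero hωc)
    intro h
    exact h0 (by linear_combination (1/2 : ℂ) * h)
  -- strip bound for k = 1
  have habs1 : ‖((c : ℝ) : ℂ) - ω‖ < ε := by
    rwa [show ((c : ℝ) : ℂ) - ω = -(ω - ((c : ℝ) : ℂ)) by ring, norm_neg]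
  have hstrip1 : |(mPole α ω 1).im| ≤ β := by
    rw [mPole_im, harg1]
    calc |(csqrt (((c : ℝ) : ℂ) - ω)).re|
        = (csqrt (((c : ℝ) : ℂ) - ω)).re := abs_of_nonneg (csqrt_re_nonneg _)
      _ ≤ Real.sqrt ‖((c : ℝ) : ℂ) - ω‖ := csqrt_re_le _
      _ ≤ Real.sqrt ε := Real.sqrt_le_sqrt habs1.le
      _ ≤ Real.sqrt (β ^ 2) := Real.sqrt_le_sqrt hεβ
      _ = β := by rw [Real.sqrt_sq hβpos.le]
  -- bound on ω.re
  have hωre : ω.re < c + ε := by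
    have h1 : |(ω - ((c : ℝ) : ℂ)).re| ≤ ‖ω - ((c : ℝ) : ℂ)‖ :=
      Complex.abs_re_le_norm _
    have h2 : (ω - ((c : ℝ) : ℂ)).re = ω.re - c := by simp
    rw [h2] at h1
    have := abs_le.mp h1
    linarith [hωε, this.1, this.2]
  -- for k ≥ 2 poles are outside the strip
  have hout : ∀ k : ℕ, 2 ≤ k → β < (mPole α ω k).im := by
    intro k hk
    rw [mPole_im]
    set u : ℂ := ((((k : ℝ) ^ 2 * Real.pi ^ 2 / α ^ 2 : ℝ)) : ℂ) - ω with hu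
    have hure : u.re = (k : ℝ) ^ 2 * c - ω.re := by
      rw [hu, Complex.sub_re, Complex.ofReal_re]; simp only [hc_def]; ring
    have hk4 : (4 : ℝ) ≤ (k : ℝ) ^ 2 := by
      have : (2 : ℝ) ≤ (k : ℝ) := by exact_mod_cast hk
      nlinarith
    have hure' : β ^ 2 < u.re := by
      rw [hure]
      nlinarith [hc, hωre, hε3, hεβ]
    calc β = Real.sqrt (β ^ 2) := (Real.sqrt_sq hβpos.le).symm
      _ < Real.sqrt u.re := Real.sqrt_lt_sqrt (by positivity) hure'
      _ ≤ (csqrt u).re := csqrt_re_ge u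
  refine ⟨?_, hm1ne⟩
  ext z
  simp only [Set.mem_inter_iff, Set.mem_setOf_eq, Set.mem_insert_iff, Set.mem_singleton_iff]
  constructor
  · rintro ⟨⟨k, hk1, hz⟩, hstrip⟩
    rcases eq_or_lt_of_le hk1 with hk | hk
    · rcases hz with rfl | rfl
      · left; rw [← hk]
      · right; rw [← hk]
    · exfalso
      have hk2 : 2 ≤ k := hk
      have := hout k hk2
      rcases hz with rfl | rfl
      · exact absurd hstrip (not_le.mpr (lt_of_lt_of_le this (le_abs_self _)))
      · rw [Complex.neg_im, abs_neg] at hstrip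
        exact absurd hstrip (not_le.mpr (lt_of_lt_of_le this (le_abs_self _)))
  · rintro (rfl | rfl)
    · exact ⟨⟨1, le_refl _, Or.inl rfl⟩, hstrip1⟩
    · refine ⟨⟨1, le_refl _, Or.inr rfl⟩, ?_⟩
      rwa [Complex.neg_im, abs_neg]
end
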